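/- The set of possible volumes of 3-way (v,3,2) Steiner trades is exactly ℕ \ {1,2,3,4,5,7}; i.e., a 3-way (v,3,2) Steiner trade of volume m exists (for some v) if and only if m ∉ {1,2,3,4,5,7}. -/

import Mathlib

/-- The blocks of a collection `Ti` that contain a given subset `S`. -/
def blocksContaining (Ti : Finset (Finset ℕ)) (S : Finset ℕ) : Finset (Finset ℕ) :=
  Ti.filter (fun B => S ⊆ B)

/-- `T` is a μ-way (v,k,t) trade of volume `m` with point set `V`:
μ pairwise disjoint collections, each of `m` k-subsets of the v-set `V`,
such that every t-subset of `V` is contained in the same number of blocks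
of each collection. -/
structure IsTrade (μ v k t m : ℕ) (V : Finset ℕ) (T : Fin μ → Finset (Finset ℕ)) : Prop where
  cardV : V.card = v
  volume : ∀ i, (T i).card = m
  blockSub : ∀ i, ∀ B ∈ T i, B ⊆ V
  blockCard : ∀ i, ∀ B ∈ T i, B.card = k
  disj : ∀ i j, i ≠ j → Disjoint (T i) (T j)
  balanced : ∀ S : Finset ℕ, S.card = t → ∀ i j,
    (blocksContaining (T i) S).card = (blocksContaining (T j) S).card

/-- A μ-way (v,k,t) Steiner trade: a trade in which every t-subset occurs
at most once in each collection. -/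
def IsSteinerTrade (μ v k t m : ℕ) (V : Finset ℕ) (T : Fin μ → Finset (Finset ℕ)) : Prop :=
  IsTrade μ v k t m V T ∧
  ∀ S : Finset ℕ, S.card = t → ∀ i, (blocksContaining (T i) S).card ≤ 1

/-- The foundation of a μ-way trade: the union of all its blocks. -/
def foundation {μ : ℕ} (T : Fin μ → Finset (Finset ℕ)) : Finset ℕ :=
  Finset.univ.biUnion (fun i => (T i).biUnion id)

/-- `T` is t-solely balanced: no two distinct collections contain a common
(t+1)-subset. -/
def SolelyBalanced {μ : ℕ} (t : ℕ) (T : Fin μ → Finset (Finset ℕ)) : Prop :=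
  ∀ i j : Fin μ, i ≠ j → ∀ S : Finset ℕ, S.card = t + 1 →
    ¬ ((∃ B ∈ T i, S ⊆ B) ∧ (∃ B ∈ T j, S ⊆ B))


set_option linter.dupNamespace false

namespace SpectrumAux


lemma mk_steiner {m : ℕ} (V : Finset ℕ) (T0 T1 T2 : Finset (Finset ℕ))
    (h0 : T0.card = m) (h1 : T1.card = m) (h2 : T2.card = m)
    (hsub : ∀ B ∈ T0 ∪ T1 ∪ T2, B ⊆ V ∧ B.card = 3)
    (hd01 : Disjoint T0 T1) (hd02 : Disjoint T0 T2) (hd12 : Disjoint T1 T2)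
    (hbal : ∀ S ∈ V.powersetCard 2,
      (blocksContaining T0 S).card = (blocksContaining T1 S).card ∧
      (blocksContaining T0 S).card = (blocksContaining T2 S).card ∧
      (blocksContaining T0 S).card ≤ 1) :
    IsSteinerTrade 3 V.card 3 2 m V ![T0, T1, T2] := by
  have hout : ∀ (W : Finset (Finset ℕ)), (∀ B ∈ W, B ⊆ V) →
      ∀ S : Finset ℕ, ¬ S ⊆ V → blocksContaining W S = ∅ := by
    intro W hW S hS
    refine Finset.filter_eq_empty_iff.2 ?_
    intro B hB hSB
    exact hS (hSB.trans (hW B hB))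
  have hsub' : ∀ i, ∀ B ∈ (![T0,T1,T2] : Fin 3 → Finset (Finset ℕ)) i, B ⊆ V ∧ B.card = 3 := by
    intro i
    fin_cases i <;> intro B hB <;> exact hsub B (by simp_all [Finset.mem_union])
  have hcnt : ∀ S : Finset ℕ, S.card = 2 → ∀ i,
      (blocksContaining ((![T0,T1,T2] : Fin 3 → Finset (Finset ℕ)) i) S).card =
      (blocksContaining T0 S).card := by
    intro S hS i
    by_cases hSV : S ⊆ V
    · have hmem : S ∈ V.powersetCard 2 := Finset.mem_powersetCard.2 ⟨hSV, hS⟩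
      obtain ⟨e1, e2, _⟩ := hbal S hmem
      fin_cases i <;> simp [e1.symm, e2.symm]
    · have z : ∀ (W : Finset (Finset ℕ)), (∀ B ∈ W, B ⊆ V ∧ B.card = 3) →
          (blocksContaining W S).card = 0 := by
        intro W hW
        rw [hout W (fun B hB => (hW B hB).1) S hSV]; rfl
      rw [z _ (hsub' i), z T0 (fun B hB => hsub B (by simp [hB]))]
  refine ⟨⟨rfl, ?_, ?_, ?_, ?_, ?_⟩, ?_⟩
  · intro i; fin_cases i <;> simpa
  · intro i B hB; exact (hsub' i B hB).1
  · intro i B hB; exact (hsub' i B hB).2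
  · intro i j hij
    fin_cases i <;> fin_cases j <;>
      first
        | exact absurd rfl hij
        | simpa using hd01
        | simpa using hd02
        | simpa using hd12
        | simpa using hd01.symm
        | simpa using hd02.symm
        | simpa using hd12.symm
  · intro S hS i j
    rw [hcnt S hS i, hcnt S hS j]
  · intro S hS i
    rw [hcnt S hS i]
    by_cases hSV : S ⊆ V
    · exact (hbal S (Finset.mem_powersetCard.2 ⟨hSV, hS⟩)).2.2
    · rw [hout T0 (fun B hB => (hsub B (by simp [hB])).1) S hSV]; simp

lemma trade_shift {v m : ℕ} {V : Finset ℕ} {T : Fin 3 → Finset (Finset ℕ)}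
    (H : IsSteinerTrade 3 v 3 2 m V T) (N : ℕ) :
    IsSteinerTrade 3 v 3 2 m (V.image (· + N))
      (fun i => (T i).image (Finset.image (· + N))) := by
  obtain ⟨HT, Hst⟩ := H
  have hf : Function.Injective (· + N) := add_left_injective N
  have hfi : Function.Injective (Finset.image (· + N)) := Finset.image_injective hf
  have hbc : ∀ (W : Finset (Finset ℕ)) (S₀ : Finset ℕ),
      blocksContaining (W.image (Finset.image (· + N))) (S₀.image (· + N)) =
      (blocksContaining W S₀).image (Finset.image (· + N)) := by
    intro W S₀
    unfold blocksContaining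
    ext B
    simp only [Finset.mem_filter, Finset.mem_image]
    constructor
    · rintro ⟨⟨B₀, hB₀, rfl⟩, hsub⟩
      exact ⟨B₀, ⟨hB₀, (Finset.image_subset_image_iff hf).1 hsub⟩, rfl⟩
    · rintro ⟨B₀, ⟨hB₀, hsub⟩, rfl⟩
      exact ⟨⟨B₀, hB₀, rfl⟩, Finset.image_subset_image hsub⟩
  have hcnt : ∀ S : Finset ℕ, S.card = 2 →
      (∃ S₀ : Finset ℕ, S₀.card = 2 ∧ S = S₀.image (· + N)) ∨
      (∀ i, blocksContaining ((T i).image (Finset.image (· + N))) S = ∅) := by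
    intro S hS
    obtain ⟨s, t, hst, rfl⟩ := Finset.card_eq_two.1 hS
    by_cases hN : N ≤ s ∧ N ≤ t
    · left
      refine ⟨{s - N, t - N}, ?_, ?_⟩
      · rw [Finset.card_insert_of_notMem (by simp; omega), Finset.card_singleton]
      · simp only [Finset.image_insert, Finset.image_singleton]
        congr 1 <;> [skip; congr 1] <;> omega
    · right
      intro i
      refine Finset.filter_eq_empty_iff.2 ?_
      rintro B hB hsub
      simp only [Finset.mem_image] at hB
      obtain ⟨B₀, _, rfl⟩ := hB
      have hs := hsub (Finset.mem_insert_self s {t})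
      have ht := hsub (Finset.mem_insert_of_mem (Finset.mem_singleton_self t))
      simp only [Finset.mem_image] at hs ht
      obtain ⟨u, _, hu⟩ := hs; obtain ⟨w, _, hw⟩ := ht
      omega
  refine ⟨⟨?_, ?_, ?_, ?_, ?_, ?_⟩, ?_⟩
  · rw [Finset.card_image_of_injective _ hf]; exact HT.cardV
  · intro i; rw [Finset.card_image_of_injective _ hfi]; exact HT.volume i
  · intro i B hB
    simp only [Finset.mem_image] at hB
    obtain ⟨B₀, hB₀, rfl⟩ := hB
    exact Finset.image_subset_image (HT.blockSub i B₀ hB₀)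
  · intro i B hB
    simp only [Finset.mem_image] at hB
    obtain ⟨B₀, hB₀, rfl⟩ := hB
    rw [Finset.card_image_of_injective _ hf]; exact HT.blockCard i B₀ hB₀
  · intro i j hij
    rw [Finset.disjoint_left]
    rintro B hB hB'
    simp only [Finset.mem_image] at hB hB'
    obtain ⟨B₀, hB₀, rfl⟩ := hB
    obtain ⟨B₁, hB₁, hB₁e⟩ := hB'
    rw [hfi hB₁e] at hB₁
    exact (Finset.disjoint_left.1 (HT.disj i j hij)) hB₀ hB₁
  · intro S hS i j
    rcases hcnt S hS with ⟨S₀, hS₀, rfl⟩ | hz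
    · rw [hbc, hbc, Finset.card_image_of_injective _ hfi,
        Finset.card_image_of_injective _ hfi]
      exact HT.balanced S₀ hS₀ i j
    · rw [hz i, hz j]
  · intro S hS i
    rcases hcnt S hS with ⟨S₀, hS₀, rfl⟩ | hz
    · rw [hbc, Finset.card_image_of_injective _ hfi]
      exact Hst S₀ hS₀ i
    · rw [hz i]; simp

lemma trade_union {v₁ v₂ m₁ m₂ : ℕ} {V₁ V₂ : Finset ℕ} {T₁ T₂ : Fin 3 → Finset (Finset ℕ)}
    (H₁ : IsSteinerTrade 3 v₁ 3 2 m₁ V₁ T₁) (H₂ : IsSteinerTrade 3 v₂ 3 2 m₂ V₂ T₂)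
    (hV : Disjoint V₁ V₂) :
    IsSteinerTrade 3 (v₁ + v₂) 3 2 (m₁ + m₂) (V₁ ∪ V₂) (fun i => T₁ i ∪ T₂ i) := by
  obtain ⟨HT₁, Hst₁⟩ := H₁; obtain ⟨HT₂, Hst₂⟩ := H₂
  have hTd : ∀ i j, Disjoint (T₁ i) (T₂ j) := by
    intro i j
    rw [Finset.disjoint_left]
    intro B hB hB'
    have h1 := HT₁.blockSub i B hB
    have h2 := HT₂.blockSub j B hB'
    have h3 := HT₁.blockCard i B hB
    have : B.Nonempty := Finset.card_pos.1 (by omega)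
    obtain ⟨x, hx⟩ := this
    exact Finset.disjoint_left.1 hV (h1 hx) (h2 hx)
  have hsplit : ∀ (A B : Finset (Finset ℕ)) (S : Finset ℕ),
      blocksContaining (A ∪ B) S = blocksContaining A S ∪ blocksContaining B S :=
    fun A B S => Finset.filter_union _ _ _
  have hcard : ∀ i (S : Finset ℕ),
      (blocksContaining (T₁ i ∪ T₂ i) S).card =
      (blocksContaining (T₁ i) S).card + (blocksContaining (T₂ i) S).card := by
    intro i S
    rw [hsplit, Finset.card_union_of_disjoint]
    exact Finset.disjoint_filter_filter (hTd i i)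
  refine ⟨⟨?_, ?_, ?_, ?_, ?_, ?_⟩, ?_⟩
  · rw [Finset.card_union_of_disjoint hV, HT₁.cardV, HT₂.cardV]
  · intro i
    rw [Finset.card_union_of_disjoint (hTd i i), HT₁.volume i, HT₂.volume i]
  · intro i B hB
    rcases Finset.mem_union.1 hB with h | h
    · exact (HT₁.blockSub i B h).trans Finset.subset_union_left
    · exact (HT₂.blockSub i B h).trans Finset.subset_union_right
  · intro i B hB
    rcases Finset.mem_union.1 hB with h | h
    · exact HT₁.blockCard i B h
    · exact HT₂.blockCard i B h
  · intro i j hij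
    rw [Finset.disjoint_union_left]
    constructor
    · rw [Finset.disjoint_union_right]; exact ⟨HT₁.disj i j hij, hTd i j⟩
    · rw [Finset.disjoint_union_right]; exact ⟨(hTd j i).symm, HT₂.disj i j hij⟩
  · intro S hS i j
    rw [hcard, hcard, HT₁.balanced S hS i j, HT₂.balanced S hS i j]
  · intro S hS i
    rw [hcard]
    have h1 := Hst₁ S hS i
    have h2 := Hst₂ S hS i
    have : (blocksContaining (T₁ i) S).card = 0 ∨ (blocksContaining (T₂ i) S).card = 0 := by
      by_contra h
      push_neg at h
      obtain ⟨B₁, hB₁⟩ := Finset.card_pos.1 (Nat.pos_of_ne_zero h.1)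
      obtain ⟨B₂, hB₂⟩ := Finset.card_pos.1 (Nat.pos_of_ne_zero h.2)
      simp only [blocksContaining, Finset.mem_filter] at hB₁ hB₂
      have hs1 : S ⊆ V₁ := hB₁.2.trans (HT₁.blockSub i B₁ hB₁.1)
      have hs2 : S ⊆ V₂ := hB₂.2.trans (HT₂.blockSub i B₂ hB₂.1)
      have : S.Nonempty := Finset.card_pos.1 (by omega)
      obtain ⟨x, hx⟩ := this
      exact Finset.disjoint_left.1 hV (hs1 hx) (hs2 hx)
    omega


def B6_0 : Finset (Finset ℕ) := {{0,3,6},{0,4,5},{1,3,5},{1,4,6},{2,3,4},{2,5,6}}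

def B6_1 : Finset (Finset ℕ) := {{0,3,5},{0,4,6},{1,3,4},{1,5,6},{2,3,6},{2,4,5}}

def B6_2 : Finset (Finset ℕ) := {{0,3,4},{0,5,6},{1,3,6},{1,4,5},{2,3,5},{2,4,6}}

def V6 : Finset ℕ := {0,1,2,3,4,5,6}

lemma exists6 : ∃ v V T, IsSteinerTrade 3 v 3 2 6 V T :=
  ⟨_, _, _, mk_steiner V6 B6_0 B6_1 B6_2 (by decide) (by decide) (by decide)
    (by decide) (by decide) (by decide) (by decide) (by decide)⟩

def B8_0 : Finset (Finset ℕ) := {{0,1,2},{0,3,6},{0,4,5},{1,3,5},{1,4,7},{2,3,7},{2,4,6},{5,6,7}}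

def B8_1 : Finset (Finset ℕ) := {{0,1,5},{0,2,3},{0,4,6},{1,2,4},{1,3,7},{2,6,7},{3,5,6},{4,5,7}}

def B8_2 : Finset (Finset ℕ) := {{0,1,3},{0,2,4},{0,5,6},{1,2,7},{1,4,5},{2,3,6},{3,5,7},{4,6,7}}

def V8 : Finset ℕ := {0,1,2,3,4,5,6,7}

lemma exists8 : ∃ v V T, IsSteinerTrade 3 v 3 2 8 V T :=
  ⟨_, _, _, mk_steiner V8 B8_0 B8_1 B8_2 (by decide) (by decide) (by decide)
    (by decide) (by decide) (by decide) (by decide) (by decide)⟩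

def B9_0 : Finset (Finset ℕ) := {{0,2,4},{0,5,6},{0,7,8},{1,2,6},{1,4,7},{1,5,8},{2,3,8},{3,4,6},{3,5,7}}

def B9_1 : Finset (Finset ℕ) := {{0,2,6},{0,4,7},{0,5,8},{1,2,8},{1,4,6},{1,5,7},{2,3,4},{3,5,6},{3,7,8}}

def B9_2 : Finset (Finset ℕ) := {{0,2,8},{0,4,6},{0,5,7},{1,2,4},{1,5,6},{1,7,8},{2,3,6},{3,4,7},{3,5,8}}

def V9 : Finset ℕ := {0,1,2,3,4,5,6,7,8}

lemma exists9 : ∃ v V T, IsSteinerTrade 3 v 3 2 9 V T :=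
  ⟨_, _, _, mk_steiner V9 B9_0 B9_1 B9_2 (by decide) (by decide) (by decide)
    (by decide) (by decide) (by decide) (by decide) (by decide)⟩

def B10_0 : Finset (Finset ℕ) := {{0,1,4},{0,2,7},{0,3,8},{0,5,6},{1,2,8},{1,3,7},{2,3,6},{3,4,5},{4,6,8},{5,7,8}}

def B10_1 : Finset (Finset ℕ) := {{0,1,2},{0,3,6},{0,4,8},{0,5,7},{1,3,4},{1,7,8},{2,3,7},{2,6,8},{3,5,8},{4,5,6}}

def B10_2 : Finset (Finset ℕ) := {{0,1,3},{0,2,6},{0,4,5},{0,7,8},{1,2,7},{1,4,8},{2,3,8},{3,4,6},{3,5,7},{5,6,8}}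

def V10 : Finset ℕ := {0,1,2,3,4,5,6,7,8}

lemma exists10 : ∃ v V T, IsSteinerTrade 3 v 3 2 10 V T :=
  ⟨_, _, _, mk_steiner V10 B10_0 B10_1 B10_2 (by decide) (by decide) (by decide)
    (by decide) (by decide) (by decide) (by decide) (by decide)⟩

def B11_0 : Finset (Finset ℕ) := {{0,1,3},{0,4,7},{0,6,8},{1,2,4},{1,5,8},{1,6,7},{2,3,6},{2,7,8},{3,4,8},{3,5,7},{4,5,6}}

def B11_1 : Finset (Finset ℕ) := {{0,1,7},{0,3,8},{0,4,6},{1,2,3},{1,4,5},{1,6,8},{2,4,8},{2,6,7},{3,4,7},{3,5,6},{5,7,8}}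

def B11_2 : Finset (Finset ℕ) := {{0,1,6},{0,3,4},{0,7,8},{1,2,8},{1,3,5},{1,4,7},{2,3,7},{2,4,6},{3,6,8},{4,5,8},{5,6,7}}

def V11 : Finset ℕ := {0,1,2,3,4,5,6,7,8}

lemma exists11 : ∃ v V T, IsSteinerTrade 3 v 3 2 11 V T :=
  ⟨_, _, _, mk_steiner V11 B11_0 B11_1 B11_2 (by decide) (by decide) (by decide)
    (by decide) (by decide) (by decide) (by decide) (by decide)⟩

def B12_0 : Finset (Finset ℕ) := {{0,1,3},{0,2,5},{0,4,7},{0,6,8},{1,2,4},{1,5,8},{1,6,7},{2,3,6},{2,7,8},{3,4,8},{3,5,7},{4,5,6}}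

def B12_1 : Finset (Finset ℕ) := {{0,1,7},{0,2,8},{0,3,5},{0,4,6},{1,2,6},{1,3,8},{1,4,5},{2,3,4},{2,5,7},{3,6,7},{4,7,8},{5,6,8}}

def B12_2 : Finset (Finset ℕ) := {{0,1,8},{0,2,3},{0,4,5},{0,6,7},{1,2,7},{1,3,5},{1,4,6},{2,4,8},{2,5,6},{3,4,7},{3,6,8},{5,7,8}}

def V12 : Finset ℕ := {0,1,2,3,4,5,6,7,8}

lemma exists12 : ∃ v V T, IsSteinerTrade 3 v 3 2 12 V T :=
  ⟨_, _, _, mk_steiner V12 B12_0 B12_1 B12_2 (by decide) (by decide) (by decide)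
    (by decide) (by decide) (by decide) (by decide) (by decide)⟩

def B13_0 : Finset (Finset ℕ) := {{0,1,6},{0,2,4},{0,3,9},{0,5,8},{1,2,5},{1,3,7},{1,4,8},{2,3,8},{2,6,9},{3,5,6},{4,5,9},{4,6,7},{7,8,9}}

def B13_1 : Finset (Finset ℕ) := {{0,1,8},{0,2,5},{0,3,6},{0,4,9},{1,2,6},{1,3,5},{1,4,7},{2,3,9},{2,4,8},{3,7,8},{4,5,6},{5,8,9},{6,7,9}}

def B13_2 : Finset (Finset ℕ) := {{0,1,4},{0,2,8},{0,3,5},{0,6,9},{1,2,3},{1,5,6},{1,7,8},{2,4,6},{2,5,9},{3,6,7},{3,8,9},{4,5,8},{4,7,9}}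

def V13 : Finset ℕ := {0,1,2,3,4,5,6,7,8,9}

lemma exists13 : ∃ v V T, IsSteinerTrade 3 v 3 2 13 V T :=
  ⟨_, _, _, mk_steiner V13 B13_0 B13_1 B13_2 (by decide) (by decide) (by decide)
    (by decide) (by decide) (by decide) (by decide) (by decide)⟩

lemma exists0 : ∃ v V T, IsSteinerTrade 3 v 3 2 0 V T :=
  ⟨_, _, _, mk_steiner ∅ ∅ ∅ ∅ rfl rfl rfl (by decide) (by decide) (by decide) (by decide)
    (by decide)⟩

lemma exists_trade : ∀ m : ℕ, m ∉ ({1, 2, 3, 4, 5, 7} : Finset ℕ) →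
    ∃ v V T, IsSteinerTrade 3 v 3 2 m V T := by
  intro m
  induction m using Nat.strong_induction_on with
  | _ m IH =>
  intro hm
  by_cases hlt : m < 14
  · have hm' : m = 0 ∨ m = 6 ∨ m = 8 ∨ m = 9 ∨ m = 10 ∨ m = 11 ∨ m = 12 ∨ m = 13 := by
      simp only [Finset.mem_insert, Finset.mem_singleton] at hm
      omega
    rcases hm' with rfl|rfl|rfl|rfl|rfl|rfl|rfl|rfl
    exacts [exists0, exists6, exists8, exists9, exists10, exists11, exists12, exists13]
  · obtain ⟨v, V, T, H⟩ := IH (m - 6) (by omega)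
      (by simp only [Finset.mem_insert, Finset.mem_singleton]; omega)
    obtain ⟨v6, V6', T6, H6⟩ := exists6
    set N := V.sup id + 1 with hN
    have hdisj : Disjoint V (V6'.image (· + N)) := by
      rw [Finset.disjoint_right]
      intro u hu hu'
      simp only [Finset.mem_image] at hu
      obtain ⟨w, _, rfl⟩ := hu
      have := Finset.le_sup (f := id) hu'
      simp only [id] at this
      omega
    have := trade_union H (trade_shift H6 N) hdisj
    rw [show m - 6 + 6 = m by omega] at this
    exact ⟨_, _, _, this⟩

end SpectrumAux

namespace SpectrumAux

def deg (W : Finset (Finset ℕ)) (x : ℕ) : ℕ := (W.filter (fun B => x ∈ B)).card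

def cov (W : Finset (Finset ℕ)) (x : ℕ) : Finset ℕ :=
  (W.filter (fun B => x ∈ B)).biUnion (fun B => B.erase x)

def Fnd (T : Fin 3 → Finset (Finset ℕ)) : Finset ℕ := (T 0).biUnion id

variable {v m : ℕ} {V : Finset ℕ} {T : Fin 3 → Finset (Finset ℕ)}

lemma pair_subset {x y : ℕ} {B : Finset ℕ} : ({x, y} : Finset ℕ) ⊆ B ↔ x ∈ B ∧ y ∈ B := by
  simp [Finset.insert_subset_iff]

lemma triple_eq {B : Finset ℕ} {x y z : ℕ} (hB : B.card = 3) (hx : x ∈ B) (hy : y ∈ B)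
    (hz : z ∈ B) (hxy : x ≠ y) (hxz : x ≠ z) (hyz : y ≠ z) : B = ({x, y, z} : Finset ℕ) := by
  have hsub : ({x, y, z} : Finset ℕ) ⊆ B := by
    intro t ht
    simp only [Finset.mem_insert, Finset.mem_singleton] at ht
    rcases ht with rfl | rfl | rfl <;> assumption
  have hcard : ({x, y, z} : Finset ℕ).card = 3 := by
    rw [Finset.card_insert_of_notMem (by simp [hxy, hxz]),
      Finset.card_insert_of_notMem (by simp [hyz]), Finset.card_singleton]
  exact (Finset.eq_of_subset_of_card_le hsub (by omega)).symm

lemma third_elt {B : Finset ℕ} {u w : ℕ} (hB : B.card = 3) (hu : u ∈ B) (hw : w ∈ B)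
    (huw : u ≠ w) : ∃ t, t ≠ u ∧ t ≠ w ∧ t ∈ B ∧ B = ({u, w, t} : Finset ℕ) := by
  have h1 : ((B.erase u).erase w).card = 1 := by
    rw [Finset.card_erase_of_mem (Finset.mem_erase.2 ⟨Ne.symm huw, hw⟩),
      Finset.card_erase_of_mem hu, hB]
  obtain ⟨t, ht⟩ := Finset.card_eq_one.1 h1
  have htm : t ∈ (B.erase u).erase w := ht ▸ Finset.mem_singleton_self t
  simp only [Finset.mem_erase] at htm
  exact ⟨t, htm.2.1, htm.1, htm.2.2,
    triple_eq hB hu hw htm.2.2 huw (Ne.symm htm.2.1) (Ne.symm htm.1)⟩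

section withH

lemma steiner_pair' (H : IsSteinerTrade 3 v 3 2 m V T) {i : Fin 3} {B B' : Finset ℕ} {x y : ℕ}
    (hxy : x ≠ y) (hB : B ∈ T i) (hB' : B' ∈ T i) (hx : x ∈ B) (hy : y ∈ B)
    (hx' : x ∈ B') (hy' : y ∈ B') : B = B' := by
  by_contra hne
  have hle := H.2 {x, y} (Finset.card_pair hxy) i
  have : 1 < (blocksContaining (T i) {x, y}).card := by
    apply Finset.one_lt_card.2
    exact ⟨B, Finset.mem_filter.2 ⟨hB, pair_subset.2 ⟨hx, hy⟩⟩,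
      B', Finset.mem_filter.2 ⟨hB', pair_subset.2 ⟨hx', hy'⟩⟩, hne⟩
  omega

lemma covered_iff (H : IsSteinerTrade 3 v 3 2 m V T) {x y : ℕ} (hxy : x ≠ y) (i j : Fin 3) :
    (∃ B ∈ T i, x ∈ B ∧ y ∈ B) ↔ (∃ B ∈ T j, x ∈ B ∧ y ∈ B) := by
  have hb := H.1.balanced {x, y} (Finset.card_pair hxy) i j
  have key : ∀ k l : Fin 3, (blocksContaining (T k) {x,y}).card = (blocksContaining (T l) {x,y}).card →
      (∃ B ∈ T k, x ∈ B ∧ y ∈ B) → (∃ B ∈ T l, x ∈ B ∧ y ∈ B) := by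
    rintro k l hc ⟨B, hB, hx, hy⟩
    have : (blocksContaining (T k) {x, y}).Nonempty :=
      ⟨B, Finset.mem_filter.2 ⟨hB, pair_subset.2 ⟨hx, hy⟩⟩⟩
    rw [← Finset.card_pos, hc, Finset.card_pos] at this
    obtain ⟨B', hB'⟩ := this
    simp only [blocksContaining, Finset.mem_filter] at hB'
    exact ⟨B', hB'.1, pair_subset.1 hB'.2⟩
  exact ⟨key i j hb, key j i hb.symm⟩

lemma mem_cov {W : Finset (Finset ℕ)} {x t : ℕ} :
    t ∈ cov W x ↔ ∃ B ∈ W, x ∈ B ∧ t ∈ B ∧ t ≠ x := by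
  simp only [cov, Finset.mem_biUnion, Finset.mem_filter, Finset.mem_erase]
  tauto

lemma cov_indep (H : IsSteinerTrade 3 v 3 2 m V T) (i j : Fin 3) (x : ℕ) :
    cov (T i) x = cov (T j) x := by
  ext t
  simp only [mem_cov]
  constructor <;> rintro ⟨B, hB, hx, ht, htx⟩
  · obtain ⟨B', hB', hx', ht'⟩ := (covered_iff H (Ne.symm htx) i j).1 ⟨B, hB, hx, ht⟩
    exact ⟨B', hB', hx', ht', htx⟩
  · obtain ⟨B', hB', hx', ht'⟩ := (covered_iff H (Ne.symm htx) j i).1 ⟨B, hB, hx, ht⟩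
    exact ⟨B', hB', hx', ht', htx⟩

lemma cov_card (H : IsSteinerTrade 3 v 3 2 m V T) (i : Fin 3) (x : ℕ) :
    (cov (T i) x).card = 2 * deg (T i) x := by
  unfold cov deg
  rw [Finset.card_biUnion]
  · have : ∀ B ∈ (T i).filter (fun B => x ∈ B), (B.erase x).card = 2 := by
      intro B hB
      simp only [Finset.mem_filter] at hB
      rw [Finset.card_erase_of_mem hB.2, H.1.blockCard i B hB.1]
    rw [Finset.sum_congr rfl this, Finset.sum_const, smul_eq_mul, mul_comm]
  · intro B hB B' hB' hne
    simp only [Finset.mem_coe, Finset.coe_filter, Set.mem_setOf_eq, Finset.mem_filter] at hB hB'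
    rw [Function.onFun, Finset.disjoint_left]
    intro t ht ht'
    simp only [Finset.mem_erase] at ht ht'
    exact hne (steiner_pair' H (Ne.symm ht.1) hB.1 hB'.1 hB.2 ht.2 hB'.2 ht'.2)

lemma cov_symm {W : Finset (Finset ℕ)} {x t : ℕ} (h : t ∈ cov W x) : x ∈ cov W t := by
  obtain ⟨B, hB, hx, ht, htx⟩ := mem_cov.1 h
  exact mem_cov.2 ⟨B, hB, ht, hx, Ne.symm htx⟩

lemma mem_Fnd {x : ℕ} : x ∈ Fnd T ↔ ∃ B ∈ T 0, x ∈ B := by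
  simp [Fnd]

lemma exists_other {B : Finset ℕ} (hB : B.card = 3) (x : ℕ) : ∃ y ∈ B, y ≠ x := by
  have h1 : 1 < B.card := by omega
  obtain ⟨a, ha, b, hb, hab⟩ := Finset.one_lt_card.1 h1
  by_cases hax : a = x
  · exact ⟨b, hb, fun h => hab (by rw [hax, h])⟩
  · exact ⟨a, ha, hax⟩

lemma block_sub_Fnd (H : IsSteinerTrade 3 v 3 2 m V T) {i : Fin 3} {B : Finset ℕ}
    (hB : B ∈ T i) : B ⊆ Fnd T := by
  intro x hx
  obtain ⟨y, hy, hyx⟩ := exists_other (H.1.blockCard i B hB) x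
  obtain ⟨B', hB', hx', _⟩ := (covered_iff H (Ne.symm hyx) i 0).1 ⟨B, hB, hx, hy⟩
  exact mem_Fnd.2 ⟨B', hB', hx'⟩

lemma cov_sub_Fnd (H : IsSteinerTrade 3 v 3 2 m V T) {i : Fin 3} {x : ℕ} :
    cov (T i) x ⊆ Fnd T := by
  intro t ht
  obtain ⟨B, hB, _, ht', _⟩ := mem_cov.1 ht
  exact block_sub_Fnd H hB ht'

lemma deg_indep (H : IsSteinerTrade 3 v 3 2 m V T) (i j : Fin 3) (x : ℕ) :
    deg (T i) x = deg (T j) x := by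
  have h1 := cov_card H i x
  have h2 := cov_card H j x
  rw [cov_indep H i j] at h1
  omega

lemma sum_deg (H : IsSteinerTrade 3 v 3 2 m V T) (i : Fin 3) :
    ∑ x ∈ Fnd T, deg (T i) x = 3 * m := by
  unfold deg
  have h1 : ∀ x ∈ Fnd T, ((T i).filter (fun B => x ∈ B)).card
      = ∑ B ∈ T i, if x ∈ B then 1 else 0 := fun x _ => Finset.card_filter _ _
  rw [Finset.sum_congr rfl h1, Finset.sum_comm]
  have h2 : ∀ B ∈ T i, (∑ x ∈ Fnd T, if x ∈ B then 1 else 0) = 3 := by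
    intro B hB
    rw [← Finset.card_filter, Finset.filter_mem_eq_inter,
      Finset.inter_eq_right.2 (block_sub_Fnd H hB)]
    exact H.1.blockCard i B hB
  rw [Finset.sum_congr rfl h2, Finset.sum_const, H.1.volume i, smul_eq_mul, mul_comm]

lemma two_le_deg (H : IsSteinerTrade 3 v 3 2 m V T) {x : ℕ} (hx : x ∈ Fnd T) (i : Fin 3) :
    2 ≤ deg (T i) x := by
  rw [deg_indep H i 0]
  obtain ⟨B, hB, hxB⟩ := mem_Fnd.1 hx
  obtain ⟨y, hy, hyx⟩ := exists_other (H.1.blockCard 0 B hB) x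
  obtain ⟨B', hB', hx', hy'⟩ := (covered_iff H (Ne.symm hyx) 0 1).1 ⟨B, hB, hxB, hy⟩
  have hBB' : B' ≠ B := by
    rintro rfl
    exact Finset.disjoint_left.1 (H.1.disj 0 1 (by decide)) hB hB'
  have : ∃ t ∈ B', t ∉ B := by
    by_contra h
    push_neg at h
    exact hBB' (Finset.eq_of_subset_of_card_le h
      (by rw [H.1.blockCard 0 B hB, H.1.blockCard 1 B' hB']))
  obtain ⟨t, htB', htB⟩ := this
  have htx : t ≠ x := fun h => htB (h ▸ hxB)
  obtain ⟨B'', hB'', hx'', ht''⟩ := (covered_iff H (Ne.symm htx) 1 0).1 ⟨B', hB', hx', htB'⟩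
  have hBB'' : B ≠ B'' := fun h => htB (h ▸ ht'')
  unfold deg
  have h2 : 1 < ((T 0).filter (fun B => x ∈ B)).card :=
    Finset.one_lt_card.2 ⟨B, Finset.mem_filter.2 ⟨hB, hxB⟩,
      B'', Finset.mem_filter.2 ⟨hB'', hx''⟩, hBB''⟩
  omega

lemma deg_le (H : IsSteinerTrade 3 v 3 2 m V T) {x : ℕ} (hx : x ∈ Fnd T) (i : Fin 3) :
    2 * deg (T i) x ≤ (Fnd T).card - 1 := by
  rw [← cov_card H i x]
  have hsub : cov (T i) x ⊆ (Fnd T).erase x := by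
    intro t ht
    exact Finset.mem_erase.2 ⟨(mem_cov.1 ht).choose_spec.2.2.2, cov_sub_Fnd H ht⟩
  calc (cov (T i) x).card ≤ ((Fnd T).erase x).card := Finset.card_le_card hsub
    _ = (Fnd T).card - 1 := Finset.card_erase_of_mem hx

lemma deg2_cov (H : IsSteinerTrade 3 v 3 2 m V T) {x : ℕ} (hx : deg (T 0) x = 2) :
    ∃ B₁ B₂ : Finset ℕ, B₁ ∈ T 0 ∧ B₂ ∈ T 0 ∧ B₁ ≠ B₂ ∧ x ∈ B₁ ∧ x ∈ B₂ ∧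
      cov (T 0) x = B₁.erase x ∪ B₂.erase x := by
  obtain ⟨B₁, B₂, hne, hfe⟩ := Finset.card_eq_two.1 hx
  have h1 : B₁ ∈ (T 0).filter (fun B => x ∈ B) := hfe ▸ Finset.mem_insert_self _ _
  have h2 : B₂ ∈ (T 0).filter (fun B => x ∈ B) :=
    hfe ▸ Finset.mem_insert_of_mem (Finset.mem_singleton_self _)
  simp only [Finset.mem_filter] at h1 h2
  refine ⟨B₁, B₂, h1.1, h2.1, hne, h1.2, h2.2, ?_⟩
  unfold cov
  rw [hfe, Finset.biUnion_insert, Finset.singleton_biUnion]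

lemma local_struct (H : IsSteinerTrade 3 v 3 2 m V T) {x : ℕ} {B₁ B₂ : Finset ℕ}
    (hB₁ : B₁ ∈ T 0) (hB₂ : B₂ ∈ T 0) (hne : B₁ ≠ B₂) (hx₁ : x ∈ B₁) (hx₂ : x ∈ B₂)
    (hcv : cov (T 0) x = B₁.erase x ∪ B₂.erase x)
    {y z : ℕ} (hy : y ∈ B₁) (hyx : y ≠ x) (hz : z ∈ B₂) (hzx : z ≠ x) :
    (∃ B ∈ T 0, y ∈ B ∧ z ∈ B) ∧ 3 ≤ deg (T 0) y := by
  have hc₁ : B₁.card = 3 := H.1.blockCard 0 B₁ hB₁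
  have hc₂ : B₂.card = 3 := H.1.blockCard 0 B₂ hB₂
  -- T 1 block through x,y
  obtain ⟨C, hC, hxC, hyC⟩ := (covered_iff H (Ne.symm hyx) 0 1).1 ⟨B₁, hB₁, hx₁, hy⟩
  obtain ⟨D, hD, hxD, hyD⟩ := (covered_iff H (Ne.symm hyx) 0 2).1 ⟨B₁, hB₁, hx₁, hy⟩
  have hCB₁ : C ≠ B₁ := by
    rintro rfl
    exact Finset.disjoint_left.1 (H.1.disj 1 0 (by decide)) hC hB₁
  have hDB₁ : D ≠ B₁ := by
    rintro rfl
    exact Finset.disjoint_left.1 (H.1.disj 2 0 (by decide)) hD hB₁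
  have hCD : C ≠ D := by
    rintro rfl
    exact Finset.disjoint_left.1 (H.1.disj 1 2 (by decide)) hC hD
  have hCe : ∃ e ∈ C, e ∉ B₁ := by
    by_contra h
    push_neg at h
    exact hCB₁ (Finset.eq_of_subset_of_card_le h (by rw [hc₁, H.1.blockCard 1 C hC]))
  have hDf : ∃ f ∈ D, f ∉ B₁ := by
    by_contra h
    push_neg at h
    exact hDB₁ (Finset.eq_of_subset_of_card_le h (by rw [hc₁, H.1.blockCard 2 D hD]))
  obtain ⟨e, heC, heB₁⟩ := hCe
  obtain ⟨f, hfD, hfB₁⟩ := hDf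
  have hex : e ≠ x := fun h => heB₁ (h ▸ hx₁)
  have hey : e ≠ y := fun h => heB₁ (h ▸ hy)
  have hfx : f ≠ x := fun h => hfB₁ (h ▸ hx₁)
  have hfy : f ≠ y := fun h => hfB₁ (h ▸ hy)
  have heB₂ : e ∈ B₂ := by
    have : e ∈ cov (T 1) x := mem_cov.2 ⟨C, hC, hxC, heC, hex⟩
    rw [cov_indep H 1 0, hcv] at this
    rcases Finset.mem_union.1 this with h | h
    · exact absurd (Finset.mem_erase.1 h).2 heB₁
    · exact (Finset.mem_erase.1 h).2
  have hfB₂ : f ∈ B₂ := by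
    have : f ∈ cov (T 2) x := mem_cov.2 ⟨D, hD, hxD, hfD, hfx⟩
    rw [cov_indep H 2 0, hcv] at this
    rcases Finset.mem_union.1 this with h | h
    · exact absurd (Finset.mem_erase.1 h).2 hfB₁
    · exact (Finset.mem_erase.1 h).2
  have hef : e ≠ f := by
    rintro rfl
    have hCe3 : C = ({x, y, e} : Finset ℕ) :=
      triple_eq (H.1.blockCard 1 C hC) hxC hyC heC (Ne.symm hyx) (Ne.symm hex) (Ne.symm hey)
    have hDe3 : D = ({x, y, e} : Finset ℕ) :=
      triple_eq (H.1.blockCard 2 D hD) hxD hyD hfD (Ne.symm hyx) (Ne.symm hex) (Ne.symm hey)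
    exact hCD (hCe3.trans hDe3.symm)
  -- B₂.erase x = {e, f}
  have herase : B₂.erase x = ({e, f} : Finset ℕ) := by
    have hsub : ({e, f} : Finset ℕ) ⊆ B₂.erase x := by
      intro t ht
      simp only [Finset.mem_insert, Finset.mem_singleton] at ht
      rcases ht with rfl | rfl
      · exact Finset.mem_erase.2 ⟨hex, heB₂⟩
      · exact Finset.mem_erase.2 ⟨hfx, hfB₂⟩
    exact (Finset.eq_of_subset_of_card_le hsub
      (by rw [Finset.card_erase_of_mem hx₂, hc₂, Finset.card_pair hef])).symm
  have hzef : z = e ∨ z = f := by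
    have : z ∈ B₂.erase x := Finset.mem_erase.2 ⟨hzx, hz⟩
    rw [herase] at this
    simpa using this
  have hye_cov : ∃ B ∈ T 0, y ∈ B ∧ e ∈ B :=
    (covered_iff H (Ne.symm hey) 1 0).1 ⟨C, hC, hyC, heC⟩
  have hyf_cov : ∃ B ∈ T 0, y ∈ B ∧ f ∈ B :=
    (covered_iff H (Ne.symm hfy) 2 0).1 ⟨D, hD, hyD, hfD⟩
  constructor
  · rcases hzef with h | h
    · rw [h]; exact hye_cov
    · rw [h]; exact hyf_cov
  · obtain ⟨De, hDe, hyDe, heDe⟩ := hye_cov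
    obtain ⟨Df, hDf', hyDf, hfDf⟩ := hyf_cov
    have h1 : B₁ ≠ De := fun h => heB₁ (h ▸ heDe)
    have h2 : B₁ ≠ Df := fun h => hfB₁ (h ▸ hfDf)
    have h3 : De ≠ Df := by
      rintro rfl
      have hR : De = ({y, e, f} : Finset ℕ) :=
        triple_eq (H.1.blockCard 0 De hDe) hyDe heDe hfDf
          (fun h => hey h.symm) (fun h => hfy h.symm) hef
      have hB₂De : B₂ ≠ De := by
        intro h
        rw [← h] at hR
        have : x ∈ ({y, e, f} : Finset ℕ) := hR ▸ hx₂
        simp only [Finset.mem_insert, Finset.mem_singleton] at this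
        rcases this with h' | h' | h' <;> simp_all
      exact hB₂De (steiner_pair' H hef hB₂ hDe heB₂ hfB₂ heDe hfDf)
    unfold deg
    refine Nat.lt_iff_add_one_le.1 (Finset.two_lt_card.2 ⟨B₁, ?_, De, ?_, Df, ?_, h1, h2, h3⟩)
    · exact Finset.mem_filter.2 ⟨hB₁, hy⟩
    · exact Finset.mem_filter.2 ⟨hDe, hyDe⟩
    · exact Finset.mem_filter.2 ⟨hDf', hyDf⟩

lemma deg2_all (H : IsSteinerTrade 3 v 3 2 m V T) {x : ℕ} (hx2 : deg (T 0) x = 2) :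
    (∀ y ∈ cov (T 0) x, 3 ≤ deg (T 0) y) ∧
    (∀ y ∈ cov (T 0) x, ∀ z ∈ cov (T 0) x, y ≠ z → ∃ B ∈ T 0, y ∈ B ∧ z ∈ B) := by
  obtain ⟨B₁, B₂, hB₁, hB₂, hne, hx₁, hx₂, hcv⟩ := deg2_cov H hx2
  have hcv' : cov (T 0) x = B₂.erase x ∪ B₁.erase x := by rw [hcv, Finset.union_comm]
  have hc₂ : B₂.card = 3 := H.1.blockCard 0 B₂ hB₂
  have hc₁ : B₁.card = 3 := H.1.blockCard 0 B₁ hB₁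
  obtain ⟨z₂, hz₂, hz₂x⟩ := exists_other hc₂ x
  obtain ⟨z₁, hz₁, hz₁x⟩ := exists_other hc₁ x
  constructor
  · intro y hy
    rcases Finset.mem_union.1 (hcv ▸ hy) with h | h
    · obtain ⟨hyx, hyB⟩ := Finset.mem_erase.1 h
      exact (local_struct H hB₁ hB₂ hne hx₁ hx₂ hcv hyB hyx hz₂ hz₂x).2
    · obtain ⟨hyx, hyB⟩ := Finset.mem_erase.1 h
      exact (local_struct H hB₂ hB₁ hne.symm hx₂ hx₁ hcv' hyB hyx hz₁ hz₁x).2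
  · intro y hy z hz hyz
    rcases Finset.mem_union.1 (hcv ▸ hy) with h1 | h1 <;>
      rcases Finset.mem_union.1 (hcv ▸ hz) with h2 | h2 <;>
      obtain ⟨hyx, hyB⟩ := Finset.mem_erase.1 h1 <;>
      obtain ⟨hzx, hzB⟩ := Finset.mem_erase.1 h2
    · exact ⟨B₁, hB₁, hyB, hzB⟩
    · exact (local_struct H hB₁ hB₂ hne hx₁ hx₂ hcv hyB hyx hzB hzx).1
    · exact (local_struct H hB₂ hB₁ hne.symm hx₂ hx₁ hcv' hyB hyx hzB hzx).1
    · exact ⟨B₂, hB₂, hyB, hzB⟩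

lemma pairs_card (H : IsSteinerTrade 3 v 3 2 m V T) (i : Fin 3) :
    (((Fnd T).powersetCard 2).filter (fun S => ∃ B ∈ T i, S ⊆ B)).card = 3 * m := by
  have h0 : ∀ S ∈ (Fnd T).powersetCard 2,
      (blocksContaining (T i) S).card = if (∃ B ∈ T i, S ⊆ B) then 1 else 0 := by
    intro S hS
    obtain ⟨hsub, hcard⟩ := Finset.mem_powersetCard.1 hS
    by_cases h : ∃ B ∈ T i, S ⊆ B
    · rw [if_pos h]
      obtain ⟨B, hB, hSB⟩ := h
      have h1 : (blocksContaining (T i) S).Nonempty := ⟨B, Finset.mem_filter.2 ⟨hB, hSB⟩⟩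
      have h2 := H.2 S hcard i
      have h3 := Finset.card_pos.2 h1
      omega
    · rw [if_neg h]
      rw [Finset.card_eq_zero]
      refine Finset.filter_eq_empty_iff.2 ?_
      intro B hB hSB
      exact h ⟨B, hB, hSB⟩
  have h1 : (((Fnd T).powersetCard 2).filter (fun S => ∃ B ∈ T i, S ⊆ B)).card
      = ∑ S ∈ (Fnd T).powersetCard 2, (blocksContaining (T i) S).card := by
    rw [Finset.card_filter, Finset.sum_congr rfl (fun S hS => (h0 S hS).symm)]
  rw [h1]
  have h2 : ∀ S ∈ (Fnd T).powersetCard 2, (blocksContaining (T i) S).card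
      = ∑ B ∈ T i, if S ⊆ B then 1 else 0 := fun S _ => Finset.card_filter _ _
  rw [Finset.sum_congr rfl h2, Finset.sum_comm]
  have h3 : ∀ B ∈ T i, (∑ S ∈ (Fnd T).powersetCard 2, if S ⊆ B then 1 else 0) = 3 := by
    intro B hB
    rw [← Finset.card_filter]
    have : ((Fnd T).powersetCard 2).filter (fun S => S ⊆ B) = B.powersetCard 2 := by
      ext S
      simp only [Finset.mem_filter, Finset.mem_powersetCard]
      constructor
      · rintro ⟨⟨_, hc⟩, hSB⟩
        exact ⟨hSB, hc⟩
      · rintro ⟨hSB, hc⟩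
        exact ⟨⟨hSB.trans (block_sub_Fnd H hB), hc⟩, hSB⟩
    rw [this, Finset.card_powersetCard, H.1.blockCard i B hB]
    decide
  rw [Finset.sum_congr rfl h3, Finset.sum_const, H.1.volume i, smul_eq_mul, mul_comm]

lemma pairs_le (H : IsSteinerTrade 3 v 3 2 m V T) : 3 * m ≤ (Fnd T).card.choose 2 := by
  rw [← pairs_card H 0, ← Finset.card_powersetCard 2 (Fnd T)]
  exact Finset.card_le_card (Finset.filter_subset _ _)

end withH

end SpectrumAux

namespace SpectrumAux
section withH2
variable {v m : ℕ} {V : Finset ℕ} {T : Fin 3 → Finset (Finset ℕ)}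

lemma le_sum_two (H : IsSteinerTrade 3 v 3 2 m V T) : 2 * (Fnd T).card ≤ 3 * m := by
  have h := sum_deg H 0
  have h2 : ∑ _x ∈ Fnd T, 2 ≤ ∑ x ∈ Fnd T, deg (T 0) x :=
    Finset.sum_le_sum (fun x hx => two_le_deg H hx 0)
  rw [Finset.sum_const, smul_eq_mul, mul_comm] at h2
  omega

lemma fnd_ge_three (H : IsSteinerTrade 3 v 3 2 m V T) (hm : 1 ≤ m) : 3 ≤ (Fnd T).card := by
  have hne : (T 0).Nonempty := Finset.card_pos.1 (by rw [H.1.volume 0]; omega)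
  obtain ⟨B, hB⟩ := hne
  calc 3 = B.card := (H.1.blockCard 0 B hB).symm
    _ ≤ (Fnd T).card := Finset.card_le_card (block_sub_Fnd H hB)

lemma fnd_ge_five (H : IsSteinerTrade 3 v 3 2 m V T) (hm : 2 ≤ m) : 5 ≤ (Fnd T).card := by
  by_contra h
  push_neg at h
  have h2 : 1 < (T 0).card := by rw [H.1.volume 0]; omega
  obtain ⟨B, hB, B', hB', hne⟩ := Finset.one_lt_card.1 h2
  have hu : B ∪ B' ⊆ Fnd T :=
    Finset.union_subset (block_sub_Fnd H hB) (block_sub_Fnd H hB')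
  have hcu : (B ∪ B').card ≤ 4 := le_trans (Finset.card_le_card hu) (by omega)
  have hci : 2 ≤ (B ∩ B').card := by
    have := Finset.card_union_add_card_inter B B'
    rw [H.1.blockCard 0 B hB, H.1.blockCard 0 B' hB'] at this
    omega
  obtain ⟨x, hx, y, hy, hxy⟩ := Finset.one_lt_card.1 (by omega : 1 < (B ∩ B').card)
  simp only [Finset.mem_inter] at hx hy
  exact hne (steiner_pair' H hxy hB hB' hx.1 hy.1 hx.2 hy.2)

lemma deg2_key (H : IsSteinerTrade 3 v 3 2 m V T) {x : ℕ} (h2 : deg (T 0) x = 2) :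
    2 * (Fnd T).card + 4 ≤ 3 * m := by
  have hc4 : (cov (T 0) x).card = 4 := by rw [cov_card H 0 x, h2]
  have hsub : cov (T 0) x ⊆ (Fnd T).filter (fun y => 3 ≤ deg (T 0) y) := by
    intro y hy
    exact Finset.mem_filter.2 ⟨cov_sub_Fnd H hy, (deg2_all H h2).1 y hy⟩
  have h4 : 4 ≤ ((Fnd T).filter (fun y => 3 ≤ deg (T 0) y)).card :=
    hc4 ▸ Finset.card_le_card hsub
  have hle : ∑ y ∈ Fnd T, (2 + if 3 ≤ deg (T 0) y then 1 else 0) ≤ ∑ y ∈ Fnd T, deg (T 0) y := by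
    refine Finset.sum_le_sum (fun y hy => ?_)
    have := two_le_deg H hy 0
    split_ifs with h <;> omega
  rw [Finset.sum_add_distrib, Finset.sum_const, ← Finset.card_filter, sum_deg H 0,
    smul_eq_mul, mul_comm] at hle
  omega

lemma all3_key (H : IsSteinerTrade 3 v 3 2 m V T) (h : ∀ x ∈ Fnd T, deg (T 0) x ≠ 2) :
    3 * (Fnd T).card ≤ 3 * m := by
  have hle : ∑ _y ∈ Fnd T, 3 ≤ ∑ y ∈ Fnd T, deg (T 0) y := by
    refine Finset.sum_le_sum (fun y hy => ?_)
    have := two_le_deg H hy 0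
    have := h y hy
    omega
  rw [Finset.sum_const, sum_deg H 0, smul_eq_mul, mul_comm] at hle
  exact hle

lemma choose_key (H : IsSteinerTrade 3 v 3 2 m V T) :
    6 * m ≤ (Fnd T).card * ((Fnd T).card - 1) := by
  have h := pairs_le H
  rw [Nat.choose_two_right] at h
  have := (Nat.le_div_iff_mul_le (by omega : 0 < 2)).1 h
  omega

lemma nonexist_small (H : IsSteinerTrade 3 v 3 2 m V T) (h1 : 1 ≤ m) (h5 : m ≤ 5) :
    False := by
  obtain ⟨n, hn⟩ : ∃ n, (Fnd T).card = n := ⟨_, rfl⟩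
  have h2n : 2 * n ≤ 3 * m := hn ▸ le_sum_two H
  have h3n : 3 ≤ n := hn ▸ fnd_ge_three H h1
  have hm1 : m = 1 ∨ 2 ≤ m := by omega
  rcases hm1 with rfl | hm2
  · omega
  have h5n : 5 ≤ n := hn ▸ fnd_ge_five H hm2
  have hck : 6 * m ≤ n * (n - 1) := hn ▸ choose_key H
  have h7 : n ≤ 7 := by omega
  have hkey : 2 * n + 4 ≤ 3 * m ∨ 3 * n ≤ 3 * m := by
    by_cases h : ∃ x ∈ Fnd T, deg (T 0) x = 2
    · obtain ⟨x, _, hx2⟩ := h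
      exact Or.inl (hn ▸ deg2_key H hx2)
    · push_neg at h
      exact Or.inr (hn ▸ all3_key H (fun x hx => h x hx))
  interval_cases n <;> omega

end withH2
end SpectrumAux

namespace SpectrumAux
section withH3
variable {v : ℕ} {V : Finset ℕ} {T : Fin 3 → Finset (Finset ℕ)}

set_option maxHeartbeats 2000000 in
lemma nonexist7_n8 (H : IsSteinerTrade 3 v 3 2 7 V T) (hn : (Fnd T).card = 8) : False := by
  have hsum := sum_deg H 0
  have hdub : ∀ y ∈ Fnd T, deg (T 0) y = 2 ∨ deg (T 0) y = 3 := by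
    intro y hy
    have h1 := two_le_deg H hy 0
    have h2 := deg_le H hy 0
    omega
  -- exactly three points of degree 2
  set D2 := (Fnd T).filter (fun y => deg (T 0) y = 2) with hD2def
  have hD2c : D2.card = 3 := by
    have hpt : ∀ y ∈ Fnd T, deg (T 0) y + (if deg (T 0) y = 2 then 1 else 0) = 3 := by
      intro y hy
      rcases hdub y hy with h | h <;> simp [h]
    have h24 : (∑ y ∈ Fnd T, deg (T 0) y) + D2.card = 24 := by
      rw [hD2def, Finset.card_filter, ← Finset.sum_add_distrib,
        Finset.sum_congr rfl hpt, Finset.sum_const, hn]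
      norm_num
    rw [hsum] at h24
    omega
  have hD2ne : D2.Nonempty := Finset.card_pos.1 (by omega)
  obtain ⟨x, hxD2⟩ := hD2ne
  have hxF : x ∈ Fnd T := (Finset.mem_filter.1 hxD2).1
  have hx2 : deg (T 0) x = 2 := (Finset.mem_filter.1 hxD2).2
  set K := cov (T 0) x with hKdef
  have hK4 : K.card = 4 := by rw [hKdef, cov_card H 0 x, hx2]
  have hKF : K ⊆ Fnd T := cov_sub_Fnd H
  have hxK : x ∉ K := by
    intro h
    exact (mem_cov.1 h).choose_spec.2.2.2 rfl
  have hK3 : ∀ y ∈ K, deg (T 0) y = 3 := by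
    intro y hy
    have h1 := (deg2_all H hx2).1 y hy
    rcases hdub y (hKF hy) with h | h <;> omega
  have hKcov : ∀ y ∈ K, ∀ z ∈ K, y ≠ z → ∃ B ∈ T 0, y ∈ B ∧ z ∈ B := (deg2_all H hx2).2
  have hiK : insert x K ⊆ Fnd T := Finset.insert_subset hxF hKF
  set R := Fnd T \ insert x K with hRdef
  have hRc : R.card = 3 := by
    rw [hRdef, Finset.card_sdiff_of_subset hiK, hn, Finset.card_insert_of_notMem hxK, hK4]
  have hRmem : ∀ u, u ∈ R ↔ (u ∈ Fnd T ∧ u ≠ x ∧ u ∉ K) := by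
    intro u
    simp only [hRdef, Finset.mem_sdiff, Finset.mem_insert]
    tauto
  -- p, q : the other two degree-2 points; they lie in R
  have hD2x : x ∈ D2 := hxD2
  have hD2e : (D2.erase x).card = 2 := by rw [Finset.card_erase_of_mem hD2x, hD2c]
  obtain ⟨p, q, hpq, hpqe⟩ := Finset.card_eq_two.1 hD2e
  have hpD2 : p ∈ D2.erase x := hpqe ▸ Finset.mem_insert_self _ _
  have hqD2 : q ∈ D2.erase x := hpqe ▸ Finset.mem_insert_of_mem (Finset.mem_singleton_self _)
  have hpx : p ≠ x := (Finset.mem_erase.1 hpD2).1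
  have hqx : q ≠ x := (Finset.mem_erase.1 hqD2).1
  have hp2 : deg (T 0) p = 2 := (Finset.mem_filter.1 (Finset.mem_of_mem_erase hpD2)).2
  have hq2 : deg (T 0) q = 2 := (Finset.mem_filter.1 (Finset.mem_of_mem_erase hqD2)).2
  have hpF : p ∈ Fnd T := (Finset.mem_filter.1 (Finset.mem_of_mem_erase hpD2)).1
  have hqF : q ∈ Fnd T := (Finset.mem_filter.1 (Finset.mem_of_mem_erase hqD2)).1
  have hpK : p ∉ K := fun h => by have := hK3 p h; omega
  have hqK : q ∉ K := fun h => by have := hK3 q h; omega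
  have hpR : p ∈ R := (hRmem p).2 ⟨hpF, hpx, hpK⟩
  have hqR : q ∈ R := (hRmem q).2 ⟨hqF, hqx, hqK⟩
  -- r : the third point of R, of degree 3
  have hpqR : ({p, q} : Finset ℕ) ⊆ R := by
    intro u hu
    simp only [Finset.mem_insert, Finset.mem_singleton] at hu
    rcases hu with rfl | rfl <;> assumption
  have hRd : (R \ {p, q}).card = 1 := by
    rw [Finset.card_sdiff_of_subset hpqR, hRc, Finset.card_pair hpq]
  obtain ⟨r, hr⟩ := Finset.card_eq_one.1 hRd
  have hrm : r ∈ R \ ({p, q} : Finset ℕ) := hr ▸ Finset.mem_singleton_self r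
  have hrR : r ∈ R := (Finset.mem_sdiff.1 hrm).1
  have hrp : r ≠ p := by
    have := (Finset.mem_sdiff.1 hrm).2; simp at this; tauto
  have hrq : r ≠ q := by
    have := (Finset.mem_sdiff.1 hrm).2; simp at this; tauto
  have hrF : r ∈ Fnd T := ((hRmem r).1 hrR).1
  have hrx : r ≠ x := ((hRmem r).1 hrR).2.1
  have hrK : r ∉ K := ((hRmem r).1 hrR).2.2
  have hr3 : deg (T 0) r = 3 := by
    rcases hdub r hrF with h | h
    · exfalso
      have : r ∈ D2.erase x := Finset.mem_erase.2 ⟨hrx, Finset.mem_filter.2 ⟨hrF, h⟩⟩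
      rw [hpqe] at this
      simp only [Finset.mem_insert, Finset.mem_singleton] at this
      tauto
    · exact h
  -- R = {p, q, r}
  have hRpqr : R = ({p, q, r} : Finset ℕ) := by
    refine (Finset.eq_of_subset_of_card_le ?_ ?_).symm
    · intro u hu
      simp only [Finset.mem_insert, Finset.mem_singleton] at hu
      rcases hu with rfl | rfl | rfl <;> assumption
    · rw [hRc]
      rw [Finset.card_insert_of_notMem (by simp [hpq, Ne.symm hrp]),
        Finset.card_insert_of_notMem (by simp [Ne.symm hrq]), Finset.card_singleton]
  have hFdecomp : ∀ u ∈ Fnd T, u = x ∨ u ∈ K ∨ u = p ∨ u = q ∨ u = r := by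
    intro u hu
    by_cases h1 : u = x
    · exact Or.inl h1
    by_cases h2 : u ∈ K
    · exact Or.inr (Or.inl h2)
    have : u ∈ R := (hRmem u).2 ⟨hu, h1, h2⟩
    rw [hRpqr] at this
    simp only [Finset.mem_insert, Finset.mem_singleton] at this
    tauto
  -- cov r = F minus r, x
  have hxcovr : x ∉ cov (T 0) r := by
    intro h
    exact hrK (cov_symm h)
  have hcovr : cov (T 0) r = ((Fnd T).erase r).erase x := by
    refine Finset.eq_of_subset_of_card_le ?_ ?_
    · intro u hu
      obtain ⟨B, hB, hrB, huB, hur⟩ := mem_cov.1 hu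
      refine Finset.mem_erase.2 ⟨?_, Finset.mem_erase.2 ⟨hur, block_sub_Fnd H hB huB⟩⟩
      rintro rfl
      exact hxcovr hu
    · rw [Finset.card_erase_of_mem (Finset.mem_erase.2 ⟨Ne.symm hrx, hxF⟩),
        Finset.card_erase_of_mem hrF, hn, cov_card H 0 r, hr3]
  have hmem_covr : ∀ u, u ∈ Fnd T → u ≠ r → u ≠ x → u ∈ cov (T 0) r := by
    intro u hu h1 h2
    rw [hcovr]
    exact Finset.mem_erase.2 ⟨h2, Finset.mem_erase.2 ⟨h1, hu⟩⟩
  -- each t in K is covered with exactly one of p, q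
  have honeof : ∀ t ∈ K, (p ∈ cov (T 0) t ∧ q ∉ cov (T 0) t) ∨
      (q ∈ cov (T 0) t ∧ p ∉ cov (T 0) t) := by
    intro t htK
    have htF : t ∈ Fnd T := hKF htK
    have htx : t ≠ x := fun h => hxK (h ▸ htK)
    have htr : t ≠ r := fun h => hrK (h ▸ htK)
    have htp : t ≠ p := fun h => hpK (h ▸ htK)
    have htq : t ≠ q := fun h => hqK (h ▸ htK)
    set A := insert x (insert r (K.erase t)) with hAdef
    have hAsub : A ⊆ cov (T 0) t := by
      intro u hu
      simp only [hAdef, Finset.mem_insert] at hu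
      rcases hu with rfl | rfl | hu
      · exact cov_symm htK
      · exact cov_symm (hmem_covr t htF htr htx)
      · obtain ⟨hut, huK⟩ := Finset.mem_erase.1 hu
        obtain ⟨B, hB, h1, h2⟩ := hKcov t htK u huK (Ne.symm hut)
        exact mem_cov.2 ⟨B, hB, h1, h2, hut⟩
    have hAcard : A.card = 5 := by
      rw [hAdef, Finset.card_insert_of_notMem (by
          simp only [Finset.mem_insert, Finset.mem_erase]
          push_neg
          exact ⟨fun h => hrx h.symm, fun _ => hxK⟩),
        Finset.card_insert_of_notMem (fun h => hrK (Finset.mem_of_mem_erase h)),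
        Finset.card_erase_of_mem htK, hK4]
    set X := cov (T 0) t ∩ ({p, q} : Finset ℕ) with hXdef
    have hXsub : X ⊆ {p, q} := Finset.inter_subset_right
    have hun : cov (T 0) t = A ∪ X := by
      refine Finset.Subset.antisymm ?_ (Finset.union_subset hAsub Finset.inter_subset_left)
      intro u hu
      have huF : u ∈ Fnd T := cov_sub_Fnd H hu
      have hut : u ≠ t := (mem_cov.1 hu).choose_spec.2.2.2
      rcases hFdecomp u huF with rfl | h | rfl | rfl | rfl
      · exact Finset.mem_union_left _ (by simp [hAdef])
      · exact Finset.mem_union_left _ (by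
          simp only [hAdef, Finset.mem_insert, Finset.mem_erase]
          exact Or.inr (Or.inr ⟨hut, h⟩))
      · exact Finset.mem_union_right _ (by simp [hXdef, hu])
      · exact Finset.mem_union_right _ (by simp [hXdef, hu])
      · exact Finset.mem_union_left _ (by simp [hAdef])
    have hdisjAX : Disjoint A X := by
      rw [Finset.disjoint_right]
      intro u hu
      have := hXsub hu
      simp only [Finset.mem_insert, Finset.mem_singleton] at this
      simp only [hAdef, Finset.mem_insert, Finset.mem_erase]
      push_neg
      rcases this with rfl | rfl
      · exact ⟨hpx, Ne.symm hrp, fun _ => hpK⟩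
      · exact ⟨hqx, Ne.symm hrq, fun _ => hqK⟩
    have hXcard : X.card = 1 := by
      have h6 : (cov (T 0) t).card = 6 := by rw [cov_card H 0 t, hK3 t htK]
      rw [hun, Finset.card_union_of_disjoint hdisjAX, hAcard] at h6
      omega
    obtain ⟨u, hu⟩ := Finset.card_eq_one.1 hXcard
    have hum : u ∈ X := hu ▸ Finset.mem_singleton_self u
    have humem := hXsub hum
    simp only [Finset.mem_insert, Finset.mem_singleton] at humem
    rcases humem with rfl | rfl
    · left
      refine ⟨(Finset.mem_inter.1 hum).1, fun hq' => ?_⟩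
      have : q ∈ X := Finset.mem_inter.2 ⟨hq', by simp⟩
      rw [hu] at this
      exact hpq (Finset.mem_singleton.1 this).symm
    · right
      refine ⟨(Finset.mem_inter.1 hum).1, fun hp' => ?_⟩
      have : p ∈ X := Finset.mem_inter.2 ⟨hp', by simp⟩
      rw [hu] at this
      exact hpq (Finset.mem_singleton.1 this)
  -- counting : q ∈ cov p
  have hsum4 : (K.filter (fun t => p ∈ cov (T 0) t)).card
      + (K.filter (fun t => q ∈ cov (T 0) t)).card = 4 := by
    have h1 : ∀ t ∈ K, ((if p ∈ cov (T 0) t then 1 else 0) : ℕ)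
        + (if q ∈ cov (T 0) t then 1 else 0) = 1 := by
      intro t ht
      rcases honeof t ht with ⟨h1, h2⟩ | ⟨h1, h2⟩ <;> simp [h1, h2]
    have h2 : ∑ t ∈ K, (((if p ∈ cov (T 0) t then 1 else 0) : ℕ)
        + (if q ∈ cov (T 0) t then 1 else 0)) = 4 := by
      rw [Finset.sum_congr rfl h1, Finset.sum_const, hK4, smul_eq_mul, mul_one]
    rw [Finset.sum_add_distrib, ← Finset.card_filter, ← Finset.card_filter] at h2
    exact h2
  have hcovp_card : (cov (T 0) p).card = 4 := by rw [cov_card H 0 p, hp2]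
  have hcovq_card : (cov (T 0) q).card = 4 := by rw [cov_card H 0 q, hq2]
  have hxcovp : x ∉ cov (T 0) p := fun h => hpK (cov_symm h)
  have hxcovq : x ∉ cov (T 0) q := fun h => hqK (cov_symm h)
  have hrcovp : r ∈ cov (T 0) p := cov_symm (hmem_covr p hpF (Ne.symm hrp) hpx)
  have hrcovq : r ∈ cov (T 0) q := cov_symm (hmem_covr q hqF (Ne.symm hrq) hqx)
  have hKfilter_p : K.filter (fun t => p ∈ cov (T 0) t) = cov (T 0) p ∩ K := by
    ext t
    simp only [Finset.mem_filter, Finset.mem_inter]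
    constructor
    · rintro ⟨h1, h2⟩; exact ⟨cov_symm h2, h1⟩
    · rintro ⟨h1, h2⟩; exact ⟨h2, cov_symm h1⟩
  have hKfilter_q : K.filter (fun t => q ∈ cov (T 0) t) = cov (T 0) q ∩ K := by
    ext t
    simp only [Finset.mem_filter, Finset.mem_inter]
    constructor
    · rintro ⟨h1, h2⟩; exact ⟨cov_symm h2, h1⟩
    · rintro ⟨h1, h2⟩; exact ⟨h2, cov_symm h1⟩
  have hdecp : cov (T 0) p = insert r ((cov (T 0) p ∩ K) ∪ (cov (T 0) p ∩ {q})) := by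
    refine Finset.Subset.antisymm ?_ ?_
    · intro u hu
      have huF : u ∈ Fnd T := cov_sub_Fnd H hu
      have hup : u ≠ p := (mem_cov.1 hu).choose_spec.2.2.2
      rcases hFdecomp u huF with rfl | h | rfl | rfl | rfl
      · exact absurd hu hxcovp
      · exact Finset.mem_insert_of_mem (Finset.mem_union_left _ (Finset.mem_inter.2 ⟨hu, h⟩))
      · exact absurd rfl hup
      · exact Finset.mem_insert_of_mem (Finset.mem_union_right _ (Finset.mem_inter.2 ⟨hu, by simp⟩))
      · exact Finset.mem_insert_self _ _
    · refine Finset.insert_subset hrcovp (Finset.union_subset ?_ ?_) <;>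
        exact Finset.inter_subset_left
  have hdecq : cov (T 0) q = insert r ((cov (T 0) q ∩ K) ∪ (cov (T 0) q ∩ {p})) := by
    refine Finset.Subset.antisymm ?_ ?_
    · intro u hu
      have huF : u ∈ Fnd T := cov_sub_Fnd H hu
      have huq : u ≠ q := (mem_cov.1 hu).choose_spec.2.2.2
      rcases hFdecomp u huF with rfl | h | rfl | rfl | rfl
      · exact absurd hu hxcovq
      · exact Finset.mem_insert_of_mem (Finset.mem_union_left _ (Finset.mem_inter.2 ⟨hu, h⟩))
      · exact Finset.mem_insert_of_mem (Finset.mem_union_right _ (Finset.mem_inter.2 ⟨hu, by simp⟩))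
      · exact absurd rfl huq
      · exact Finset.mem_insert_self _ _
    · refine Finset.insert_subset hrcovq (Finset.union_subset ?_ ?_) <;>
        exact Finset.inter_subset_left
  have hqcovp : q ∈ cov (T 0) p := by
    by_contra hqcp
    have hpcq : p ∉ cov (T 0) q := fun h => hqcp (cov_symm h)
    have he1 : cov (T 0) p ∩ ({q} : Finset ℕ) = ∅ := by
      rw [Finset.eq_empty_iff_forall_notMem]
      intro u hu
      obtain ⟨h1, h2⟩ := Finset.mem_inter.1 hu
      rw [Finset.mem_singleton] at h2
      exact hqcp (h2 ▸ h1)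
    have he2 : cov (T 0) q ∩ ({p} : Finset ℕ) = ∅ := by
      rw [Finset.eq_empty_iff_forall_notMem]
      intro u hu
      obtain ⟨h1, h2⟩ := Finset.mem_inter.1 hu
      rw [Finset.mem_singleton] at h2
      exact hpcq (h2 ▸ h1)
    have hc1 : (cov (T 0) p).card = 1 + (cov (T 0) p ∩ K).card := by
      conv_lhs => rw [hdecp]
      rw [he1, Finset.union_empty,
        Finset.card_insert_of_notMem (fun h => hrK (Finset.mem_inter.1 h).2)]
      omega
    have hc2 : (cov (T 0) q).card = 1 + (cov (T 0) q ∩ K).card := by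
      conv_lhs => rw [hdecq]
      rw [he2, Finset.union_empty,
        Finset.card_insert_of_notMem (fun h => hrK (Finset.mem_inter.1 h).2)]
      omega
    rw [hKfilter_p, hKfilter_q] at hsum4
    omega
  -- the block through p, q must be {p,q,r}, in both T 0 and T 1
  have hblock : ∀ i : Fin 3, ∀ B ∈ T i, p ∈ B → q ∈ B → B = ({p, q, r} : Finset ℕ) := by
    intro i B hB hpB hqB
    have hsub : B ⊆ ({p, q, r} : Finset ℕ) := by
      intro u huB
      have huF : u ∈ Fnd T := block_sub_Fnd H hB huB
      simp only [Finset.mem_insert, Finset.mem_singleton]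
      by_contra hu
      push_neg at hu
      obtain ⟨hu1, hu2, hu3⟩ := hu
      rcases hFdecomp u huF with rfl | h | rfl | rfl | rfl
      · -- u = x : then p ∈ cov x = K, contradiction
        have : p ∈ cov (T i) u := mem_cov.2 ⟨B, hB, huB, hpB, hpx⟩
        rw [cov_indep H i 0] at this
        exact hpK this
      · -- u ∈ K : both p and q in cov u
        have hp' : p ∈ cov (T i) u := mem_cov.2 ⟨B, hB, huB, hpB, fun h => hu1 h.symm⟩
        have hq' : q ∈ cov (T i) u := mem_cov.2 ⟨B, hB, huB, hqB, fun h => hu2 h.symm⟩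
        rw [cov_indep H i 0] at hp' hq'
        rcases honeof u h with ⟨_, h2⟩ | ⟨_, h2⟩
        · exact h2 hq'
        · exact h2 hp'
      · exact hu1 rfl
      · exact hu2 rfl
      · exact hu3 rfl
    refine Finset.eq_of_subset_of_card_le hsub ?_
    rw [H.1.blockCard i B hB]
    have h1 := Finset.card_insert_le p ({q, r} : Finset ℕ)
    have h2 := Finset.card_insert_le q ({r} : Finset ℕ)
    rw [Finset.card_singleton] at h2
    omega
  obtain ⟨B₀, hB₀, hpB₀, hqB₀, _⟩ := mem_cov.1 hqcovp
  obtain ⟨B₁, hB₁, hpB₁, hqB₁⟩ := (covered_iff H hpq 0 1).1 ⟨B₀, hB₀, hpB₀, hqB₀⟩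
  have he₀ := hblock 0 B₀ hB₀ hpB₀ hqB₀
  have he₁ := hblock 1 B₁ hB₁ hpB₁ hqB₁
  rw [← he₁] at he₀
  exact Finset.disjoint_left.1 (H.1.disj 0 1 (by decide)) hB₀ (he₀ ▸ hB₁)

end withH3
end SpectrumAux

namespace SpectrumAux

set_option maxHeartbeats 2000000 in
lemma fano_structure {W : Finset (Finset ℕ)} {F : Finset ℕ} {a b c : ℕ}
    (hF : F.card = 7)
    (hcov : ∀ u v : ℕ, u ∈ F → v ∈ F → u ≠ v → ∃ B ∈ W, u ∈ B ∧ v ∈ B)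
    (huniq : ∀ B ∈ W, ∀ B' ∈ W, ∀ u v : ℕ, u ≠ v → u ∈ B → v ∈ B → u ∈ B' → v ∈ B' → B = B')
    (hcard : ∀ B ∈ W, B.card = 3) (hsub : ∀ B ∈ W, B ⊆ F)
    (haF : a ∈ F) (hbF : b ∈ F) (hcF : c ∈ F)
    (hab : a ≠ b) (hac : a ≠ c) (hbc : b ≠ c)
    (hnot : ({a, b, c} : Finset ℕ) ∉ W) :
    ∃ x y z w : ℕ,
      (x ≠ a ∧ x ≠ b ∧ x ≠ c ∧ y ≠ a ∧ y ≠ b ∧ y ≠ c ∧ z ≠ a ∧ z ≠ b ∧ z ≠ c ∧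
       w ≠ a ∧ w ≠ b ∧ w ≠ c ∧ x ≠ y ∧ x ≠ z ∧ x ≠ w ∧ y ≠ z ∧ y ≠ w ∧ z ≠ w) ∧
      F = ({a, b, c, x, y, z, w} : Finset ℕ) ∧
      ({a, b, x} : Finset ℕ) ∈ W ∧ ({a, c, y} : Finset ℕ) ∈ W ∧ ({b, c, z} : Finset ℕ) ∈ W ∧
      ({a, z, w} : Finset ℕ) ∈ W ∧ ({b, y, w} : Finset ℕ) ∈ W ∧ ({c, x, w} : Finset ℕ) ∈ W ∧
      ({x, y, z} : Finset ℕ) ∈ W := by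
  -- block through a,b
  obtain ⟨Bab, hBab, haab, hbab⟩ := hcov a b haF hbF hab
  obtain ⟨x, hxa, hxb, hxBab, hBabE⟩ := third_elt (hcard _ hBab) haab hbab hab
  have hxF : x ∈ F := hsub _ hBab hxBab
  have hxc : x ≠ c := by
    rintro rfl
    exact hnot (hBabE ▸ hBab)
  -- block through a,c
  obtain ⟨Bac, hBac, haac, hcac⟩ := hcov a c haF hcF hac
  obtain ⟨y, hya, hyc, hyBac, hBacE⟩ := third_elt (hcard _ hBac) haac hcac hac
  have hyF : y ∈ F := hsub _ hBac hyBac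
  have hyb : y ≠ b := by
    rintro rfl
    apply hnot
    rw [show ({a, y, c} : Finset ℕ) = {a, c, y} from by ext u; simp; tauto]
    exact hBacE ▸ hBac
  have hyx : y ≠ x := by
    rintro rfl
    have he : Bab = Bac := huniq _ hBab _ hBac a y (Ne.symm hya) haab hxBab haac hyBac
    have : c ∈ Bab := he ▸ hcac
    rw [hBabE] at this
    simp only [Finset.mem_insert, Finset.mem_singleton] at this
    rcases this with h | h | h
    exacts [hac h.symm, hbc h.symm, hxc h.symm]
  -- block through b,c
  obtain ⟨Bbc, hBbc, hbbc, hcbc⟩ := hcov b c hbF hcF hbc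
  obtain ⟨z, hzb, hzc, hzBbc, hBbcE⟩ := third_elt (hcard _ hBbc) hbbc hcbc hbc
  have hzF : z ∈ F := hsub _ hBbc hzBbc
  have hza : z ≠ a := by
    rintro rfl
    apply hnot
    rw [show ({z, b, c} : Finset ℕ) = {b, c, z} from by ext u; simp; tauto]
    exact hBbcE ▸ hBbc
  have hzx : z ≠ x := by
    rintro rfl
    have he : Bab = Bbc := huniq _ hBab _ hBbc b z (Ne.symm hzb) hbab hxBab hbbc hzBbc
    have : c ∈ Bab := he ▸ hcbc
    rw [hBabE] at this
    simp only [Finset.mem_insert, Finset.mem_singleton] at this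
    rcases this with h | h | h
    exacts [hac h.symm, hbc h.symm, hxc h.symm]
  have hzy : z ≠ y := by
    rintro rfl
    have he : Bac = Bbc := huniq _ hBac _ hBbc c z (Ne.symm hzc) hcac hyBac hcbc hzBbc
    have : b ∈ Bac := he ▸ hbbc
    rw [hBacE] at this
    simp only [Finset.mem_insert, Finset.mem_singleton] at this
    rcases this with h | h | h
    exacts [hab h.symm, hbc h, hyb h.symm]
  -- the seventh point w
  have hS6 : ({a, b, c, x, y, z} : Finset ℕ).card = 6 := by
    rw [Finset.card_insert_of_notMem (by simp [hab, hac, Ne.symm hxa, Ne.symm hya, Ne.symm hza]),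
      Finset.card_insert_of_notMem (by simp [hbc, Ne.symm hxb, Ne.symm hyb, Ne.symm hzb]),
      Finset.card_insert_of_notMem (by simp [Ne.symm hxc, Ne.symm hyc, Ne.symm hzc]),
      Finset.card_insert_of_notMem (by simp [hyx.symm, hzx.symm]),
      Finset.card_insert_of_notMem (by simp [hzy.symm]), Finset.card_singleton]
  have hS6F : ({a, b, c, x, y, z} : Finset ℕ) ⊆ F := by
    intro u hu
    simp only [Finset.mem_insert, Finset.mem_singleton] at hu
    rcases hu with rfl | rfl | rfl | rfl | rfl | rfl <;> assumption
  have hwcard : (F \ ({a, b, c, x, y, z} : Finset ℕ)).card = 1 := by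
    rw [Finset.card_sdiff_of_subset hS6F, hF, hS6]
  obtain ⟨w, hw⟩ := Finset.card_eq_one.1 hwcard
  have hwm : w ∈ F \ ({a, b, c, x, y, z} : Finset ℕ) := hw ▸ Finset.mem_singleton_self w
  obtain ⟨hwF, hwS6⟩ := Finset.mem_sdiff.1 hwm
  simp only [Finset.mem_insert, Finset.mem_singleton] at hwS6
  push_neg at hwS6
  obtain ⟨hwa, hwb, hwc, hwx, hwy, hwz⟩ := hwS6
  have hFeq : F = ({a, b, c, x, y, z, w} : Finset ℕ) := by
    have h1 : ({a, b, c, x, y, z} : Finset ℕ) ∪ (F \ {a, b, c, x, y, z}) = F :=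
      Finset.union_sdiff_of_subset hS6F
    rw [hw] at h1
    rw [← h1]
    ext u
    simp only [Finset.mem_union, Finset.mem_insert, Finset.mem_singleton]
    tauto
  -- a utility to find the third point of further blocks
  have hmemF : ∀ u ∈ F, u = a ∨ u = b ∨ u = c ∨ u = x ∨ u = y ∨ u = z ∨ u = w := by
    intro u hu
    rw [hFeq] at hu
    simpa using hu
  -- block through a,z is {a,z,w}
  obtain ⟨Baz, hBaz, haaz, hzaz⟩ := hcov a z haF hzF (Ne.symm hza)
  obtain ⟨t₁, ht₁a, ht₁z, ht₁m, hBazE⟩ := third_elt (hcard _ hBaz) haaz hzaz (Ne.symm hza)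
  have ht₁w : t₁ = w := by
    rcases hmemF t₁ (hsub _ hBaz ht₁m) with rfl | rfl | rfl | rfl | rfl | rfl | rfl
    · exact absurd rfl ht₁a
    · exfalso
      have he : Baz = Bab := huniq _ hBaz _ hBab a t₁ hab haaz ht₁m haab hbab
      have : z ∈ Bab := he ▸ hzaz
      rw [hBabE] at this
      simp only [Finset.mem_insert, Finset.mem_singleton] at this
      rcases this with h | h | h
      exacts [hza h, hzb h, hzx h]
    · exfalso
      have he : Baz = Bac := huniq _ hBaz _ hBac a t₁ hac haaz ht₁m haac hcac
      have : z ∈ Bac := he ▸ hzaz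
      rw [hBacE] at this
      simp only [Finset.mem_insert, Finset.mem_singleton] at this
      rcases this with h | h | h
      exacts [hza h, hzc h, hzy h]
    · exfalso
      have he : Baz = Bab := huniq _ hBaz _ hBab a t₁ (Ne.symm hxa) haaz ht₁m haab hxBab
      have : z ∈ Bab := he ▸ hzaz
      rw [hBabE] at this
      simp only [Finset.mem_insert, Finset.mem_singleton] at this
      rcases this with h | h | h
      exacts [hza h, hzb h, hzx h]
    · exfalso
      have he : Baz = Bac := huniq _ hBaz _ hBac a t₁ (Ne.symm hya) haaz ht₁m haac hyBac
      have : z ∈ Bac := he ▸ hzaz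
      rw [hBacE] at this
      simp only [Finset.mem_insert, Finset.mem_singleton] at this
      rcases this with h | h | h
      exacts [hza h, hzc h, hzy h]
    · exact absurd rfl ht₁z
    · rfl
  rw [ht₁w] at hBazE
  -- block through b,y is {b,y,w}
  obtain ⟨Bby, hBby, hbby, hyby⟩ := hcov b y hbF hyF (Ne.symm hyb)
  obtain ⟨t₂, ht₂b, ht₂y, ht₂m, hBbyE⟩ := third_elt (hcard _ hBby) hbby hyby (Ne.symm hyb)
  have ht₂w : t₂ = w := by
    rcases hmemF t₂ (hsub _ hBby ht₂m) with rfl | rfl | rfl | rfl | rfl | rfl | rfl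
    · exfalso
      have he : Bby = Bab := huniq _ hBby _ hBab t₂ b hab ht₂m hbby haab hbab
      have : y ∈ Bab := he ▸ hyby
      rw [hBabE] at this
      simp only [Finset.mem_insert, Finset.mem_singleton] at this
      rcases this with h | h | h
      exacts [hya h, hyb h, hyx h]
    · exact absurd rfl ht₂b
    · exfalso
      have he : Bby = Bbc := huniq _ hBby _ hBbc b t₂ hbc hbby ht₂m hbbc hcbc
      have : y ∈ Bbc := he ▸ hyby
      rw [hBbcE] at this
      simp only [Finset.mem_insert, Finset.mem_singleton] at this
      rcases this with h | h | h
      exacts [hyb h, hyc h, hzy h.symm]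
    · exfalso
      have he : Bby = Bab := huniq _ hBby _ hBab b t₂ (Ne.symm hxb) hbby ht₂m hbab hxBab
      have : y ∈ Bab := he ▸ hyby
      rw [hBabE] at this
      simp only [Finset.mem_insert, Finset.mem_singleton] at this
      rcases this with h | h | h
      exacts [hya h, hyb h, hyx h]
    · exact absurd rfl ht₂y
    · exfalso
      have he : Bby = Bbc := huniq _ hBby _ hBbc b t₂ (Ne.symm hzb) hbby ht₂m hbbc hzBbc
      have : y ∈ Bbc := he ▸ hyby
      rw [hBbcE] at this
      simp only [Finset.mem_insert, Finset.mem_singleton] at this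
      rcases this with h | h | h
      exacts [hyb h, hyc h, hzy h.symm]
    · rfl
  rw [ht₂w] at hBbyE
  -- block through c,x is {c,x,w}
  obtain ⟨Bcx, hBcx, hccx, hxcx⟩ := hcov c x hcF hxF (Ne.symm hxc)
  obtain ⟨t₃, ht₃c, ht₃x, ht₃m, hBcxE⟩ := third_elt (hcard _ hBcx) hccx hxcx (Ne.symm hxc)
  have ht₃w : t₃ = w := by
    rcases hmemF t₃ (hsub _ hBcx ht₃m) with rfl | rfl | rfl | rfl | rfl | rfl | rfl
    · exfalso
      have he : Bcx = Bac := huniq _ hBcx _ hBac t₃ c hac ht₃m hccx haac hcac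
      have : x ∈ Bac := he ▸ hxcx
      rw [hBacE] at this
      simp only [Finset.mem_insert, Finset.mem_singleton] at this
      rcases this with h | h | h
      exacts [hxa h, hxc h, hyx h.symm]
    · exfalso
      have he : Bcx = Bbc := huniq _ hBcx _ hBbc t₃ c hbc ht₃m hccx hbbc hcbc
      have : x ∈ Bbc := he ▸ hxcx
      rw [hBbcE] at this
      simp only [Finset.mem_insert, Finset.mem_singleton] at this
      rcases this with h | h | h
      exacts [hxb h, hxc h, hzx h.symm]
    · exact absurd rfl ht₃c
    · exact absurd rfl ht₃x
    · exfalso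
      have he : Bcx = Bac := huniq _ hBcx _ hBac c t₃ (Ne.symm hyc) hccx ht₃m hcac hyBac
      have : x ∈ Bac := he ▸ hxcx
      rw [hBacE] at this
      simp only [Finset.mem_insert, Finset.mem_singleton] at this
      rcases this with h | h | h
      exacts [hxa h, hxc h, hyx h.symm]
    · exfalso
      have he : Bcx = Bbc := huniq _ hBcx _ hBbc c t₃ (Ne.symm hzc) hccx ht₃m hcbc hzBbc
      have : x ∈ Bbc := he ▸ hxcx
      rw [hBbcE] at this
      simp only [Finset.mem_insert, Finset.mem_singleton] at this
      rcases this with h | h | h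
      exacts [hxb h, hxc h, hzx h.symm]
    · rfl
  rw [ht₃w] at hBcxE
  -- block through x,y is {x,y,z}
  obtain ⟨Bxy, hBxy, hxxy, hyxy⟩ := hcov x y hxF hyF (Ne.symm hyx)
  obtain ⟨t₄, ht₄x, ht₄y, ht₄m, hBxyE⟩ := third_elt (hcard _ hBxy) hxxy hyxy (Ne.symm hyx)
  have ht₄z : t₄ = z := by
    rcases hmemF t₄ (hsub _ hBxy ht₄m) with rfl | rfl | rfl | rfl | rfl | rfl | rfl
    · exfalso
      have he : Bxy = Bab := huniq _ hBxy _ hBab t₄ x (Ne.symm hxa) ht₄m hxxy haab hxBab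
      have : y ∈ Bab := he ▸ hyxy
      rw [hBabE] at this
      simp only [Finset.mem_insert, Finset.mem_singleton] at this
      rcases this with h | h | h
      exacts [hya h, hyb h, hyx h]
    · exfalso
      have he : Bxy = Bab := huniq _ hBxy _ hBab t₄ x (Ne.symm hxb) ht₄m hxxy hbab hxBab
      have : y ∈ Bab := he ▸ hyxy
      rw [hBabE] at this
      simp only [Finset.mem_insert, Finset.mem_singleton] at this
      rcases this with h | h | h
      exacts [hya h, hyb h, hyx h]
    · exfalso
      have he : Bxy = Bcx := huniq _ hBxy _ hBcx t₄ x (Ne.symm hxc) ht₄m hxxy hccx hxcx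
      have : y ∈ Bcx := he ▸ hyxy
      rw [hBcxE] at this
      simp only [Finset.mem_insert, Finset.mem_singleton] at this
      rcases this with h | h | h
      exacts [hyc h, hyx h, hwy h.symm]
    · exact absurd rfl ht₄x
    · exact absurd rfl ht₄y
    · rfl
    · exfalso
      have he : Bxy = Bcx := huniq _ hBxy _ hBcx t₄ x hwx ht₄m hxxy
        (by rw [hBcxE]; simp) (by rw [hBcxE]; simp)
      have : y ∈ Bcx := he ▸ hyxy
      rw [hBcxE] at this
      simp only [Finset.mem_insert, Finset.mem_singleton] at this
      rcases this with h | h | h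
      exacts [hyc h, hyx h, hwy h.symm]
  rw [ht₄z] at hBxyE
  exact ⟨x, y, z, w,
    ⟨hxa, hxb, hxc, hya, hyb, hyc, hza, hzb, hzc, hwa, hwb, hwc,
      Ne.symm hyx, Ne.symm hzx, Ne.symm hwx, Ne.symm hzy, Ne.symm hwy, Ne.symm hwz⟩,
    hFeq, hBabE ▸ hBab, hBacE ▸ hBac, hBbcE ▸ hBbc, hBazE ▸ hBaz, hBbyE ▸ hBby,
    hBcxE ▸ hBcx, hBxyE ▸ hBxy⟩

end SpectrumAux

namespace SpectrumAux

def Gq (s t u v : ℕ) : Finset (Finset ℕ) :=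
  {{0,1,s},{0,2,t},{1,2,u},{0,u,v},{1,t,v},{2,s,v},{s,t,u}}

set_option maxRecDepth 10000 in
lemma fano_core : ∀ s₁ ∈ ({3,4,5,6} : Finset ℕ), ∀ t₁ ∈ ({3,4,5,6} : Finset ℕ),
    ∀ u₁ ∈ ({3,4,5,6} : Finset ℕ), ∀ v₁ ∈ ({3,4,5,6} : Finset ℕ),
    ({s₁,t₁,u₁,v₁} : Finset ℕ) = {3,4,5,6} →
    ∀ s₂ ∈ ({3,4,5,6} : Finset ℕ), ∀ t₂ ∈ ({3,4,5,6} : Finset ℕ),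
    ∀ u₂ ∈ ({3,4,5,6} : Finset ℕ), ∀ v₂ ∈ ({3,4,5,6} : Finset ℕ),
    ({s₂,t₂,u₂,v₂} : Finset ℕ) = {3,4,5,6} →
    ((Gq 3 4 5 6 ∩ Gq s₁ t₁ u₁ v₁).Nonempty ∨ (Gq 3 4 5 6 ∩ Gq s₂ t₂ u₂ v₂).Nonempty ∨
     (Gq s₁ t₁ u₁ v₁ ∩ Gq s₂ t₂ u₂ v₂).Nonempty) := by decide

section n7sec
variable {v : ℕ} {V : Finset ℕ} {T : Fin 3 → Finset (Finset ℕ)}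

set_option maxHeartbeats 3000000 in
lemma nonexist7_n7 (H : IsSteinerTrade 3 v 3 2 7 V T) (hn : (Fnd T).card = 7) : False := by
  -- every pair of foundation points is covered in every collection
  have hpc := pairs_card H 0
  have hfull : ((Fnd T).powersetCard 2).filter (fun S => ∃ B ∈ T 0, S ⊆ B)
      = (Fnd T).powersetCard 2 := by
    apply Finset.eq_of_subset_of_card_le (Finset.filter_subset _ _)
    rw [hpc, Finset.card_powersetCard, hn]
    decide
  have hcov : ∀ i : Fin 3, ∀ u v' : ℕ, u ∈ Fnd T → v' ∈ Fnd T → u ≠ v' →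
      ∃ B ∈ T i, u ∈ B ∧ v' ∈ B := by
    intro i u v' hu hv huv
    have hS : ({u, v'} : Finset ℕ) ∈ (Fnd T).powersetCard 2 :=
      Finset.mem_powersetCard.2 ⟨by intro t ht; simp only [Finset.mem_insert,
        Finset.mem_singleton] at ht; rcases ht with rfl | rfl <;> assumption,
        Finset.card_pair huv⟩
    have := hfull ▸ hS
    rw [Finset.mem_filter] at this
    obtain ⟨_, B, hB, hsub⟩ := this
    obtain ⟨h1, h2⟩ := pair_subset.1 hsub
    exact (covered_iff H huv 0 i).1 ⟨B, hB, h1, h2⟩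
  -- a triple not used by any collection
  have hTsub : ∀ i : Fin 3, T i ⊆ (Fnd T).powersetCard 3 := by
    intro i B hB
    exact Finset.mem_powersetCard.2 ⟨block_sub_Fnd H hB, H.1.blockCard i B hB⟩
  have hcard_un : ((T 0 ∪ T 1) ∪ T 2).card ≤ 21 := by
    calc ((T 0 ∪ T 1) ∪ T 2).card ≤ (T 0 ∪ T 1).card + (T 2).card := Finset.card_union_le _ _
      _ ≤ (T 0).card + (T 1).card + (T 2).card := by
          have := Finset.card_union_le (T 0) (T 1)
          omega
      _ = 21 := by rw [H.1.volume 0, H.1.volume 1, H.1.volume 2]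
  have hunused : ((Fnd T).powersetCard 3 \ ((T 0 ∪ T 1) ∪ T 2)).Nonempty := by
    rw [← Finset.card_pos]
    have h35 : ((Fnd T).powersetCard 3).card = 35 := by
      rw [Finset.card_powersetCard, hn]
      decide
    have := Finset.le_card_sdiff ((T 0 ∪ T 1) ∪ T 2) ((Fnd T).powersetCard 3)
    omega
  obtain ⟨N, hN⟩ := hunused
  obtain ⟨hNpow, hNout⟩ := Finset.mem_sdiff.1 hN
  obtain ⟨hNsub, hNcard⟩ := Finset.mem_powersetCard.1 hNpow
  obtain ⟨a, b, c, hab, hac, hbc, hNe⟩ := Finset.card_eq_three.1 hNcard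
  have haF : a ∈ Fnd T := hNsub (hNe ▸ by simp)
  have hbF : b ∈ Fnd T := hNsub (hNe ▸ by simp)
  have hcF : c ∈ Fnd T := hNsub (hNe ▸ by simp)
  have hnot : ∀ i : Fin 3, ({a, b, c} : Finset ℕ) ∉ T i := by
    intro i hmem
    apply hNout
    rw [hNe]
    fin_cases i
    · exact Finset.mem_union_left _ (Finset.mem_union_left _ hmem)
    · exact Finset.mem_union_left _ (Finset.mem_union_right _ hmem)
    · exact Finset.mem_union_right _ hmem
  -- apply the structure lemma to each collection
  have hstr : ∀ i : Fin 3, ∃ x y z w : ℕ,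
      (x ≠ a ∧ x ≠ b ∧ x ≠ c ∧ y ≠ a ∧ y ≠ b ∧ y ≠ c ∧ z ≠ a ∧ z ≠ b ∧ z ≠ c ∧
       w ≠ a ∧ w ≠ b ∧ w ≠ c ∧ x ≠ y ∧ x ≠ z ∧ x ≠ w ∧ y ≠ z ∧ y ≠ w ∧ z ≠ w) ∧
      Fnd T = ({a, b, c, x, y, z, w} : Finset ℕ) ∧
      ({a, b, x} : Finset ℕ) ∈ T i ∧ ({a, c, y} : Finset ℕ) ∈ T i ∧
      ({b, c, z} : Finset ℕ) ∈ T i ∧ ({a, z, w} : Finset ℕ) ∈ T i ∧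
      ({b, y, w} : Finset ℕ) ∈ T i ∧ ({c, x, w} : Finset ℕ) ∈ T i ∧
      ({x, y, z} : Finset ℕ) ∈ T i := by
    intro i
    exact fano_structure hn (hcov i)
      (fun B hB B' hB' u' v' huv hu hv hu' hv' =>
        steiner_pair' H huv hB hB' hu hv hu' hv')
      (H.1.blockCard i) (fun B hB => block_sub_Fnd H hB)
      haF hbF hcF hab hac hbc (hnot i)
  obtain ⟨x, y, z, w, hd0, hFeq, hm01, hm02, hm03, hm04, hm05, hm06, hm07⟩ := hstr 0
  obtain ⟨x₁, y₁, z₁, w₁, hd1, hFeq1, hm11, hm12, hm13, hm14, hm15, hm16, hm17⟩ := hstr 1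
  obtain ⟨x₂, y₂, z₂, w₂, hd2, hFeq2, hm21, hm22, hm23, hm24, hm25, hm26, hm27⟩ := hstr 2
  obtain ⟨hxa, hxb, hxc, hya, hyb, hyc, hza, hzb, hzc, hwa, hwb, hwc,
    hxy, hxz, hxw, hyz, hyw, hzw⟩ := hd0
  -- the relabelling map
  set f : ℕ → ℕ := fun t => if t = a then 0 else if t = b then 1 else if t = c then 2
    else if t = x then 3 else if t = y then 4 else if t = z then 5
    else if t = w then 6 else 7 with hfdef
  have hfa : f a = 0 := by simp [hfdef]
  have hfb : f b = 1 := by simp [hfdef, Ne.symm hab]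
  have hfc : f c = 2 := by simp [hfdef, Ne.symm hac, Ne.symm hbc]
  have hfx : f x = 3 := by simp [hfdef, hxa, hxb, hxc]
  have hfy : f y = 4 := by simp [hfdef, hya, hyb, hyc, Ne.symm hxy]
  have hfz : f z = 5 := by simp [hfdef, hza, hzb, hzc, Ne.symm hxz, Ne.symm hyz]
  have hfw : f w = 6 := by
    simp [hfdef, hwa, hwb, hwc, Ne.symm hxw, Ne.symm hyw, Ne.symm hzw]
  have himg : (Fnd T).image f = ({0,1,2,3,4,5,6} : Finset ℕ) := by
    rw [hFeq]
    simp only [Finset.image_insert, Finset.image_singleton, hfa, hfb, hfc, hfx, hfy, hfz, hfw]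
  have hinj : Set.InjOn f (Fnd T) := by
    apply Finset.injOn_of_card_image_eq
    rw [himg, hn]
    decide
  have himageq : ∀ B B' : Finset ℕ, B ⊆ Fnd T → B' ⊆ Fnd T →
      B.image f = B'.image f → B = B' := by
    intro B B' hB hB' he
    ext u
    constructor
    · intro hu
      have : f u ∈ B'.image f := he ▸ Finset.mem_image_of_mem f hu
      obtain ⟨u', hu', he'⟩ := Finset.mem_image.1 this
      rwa [hinj (hB' hu') (hB hu) he'] at hu'
    · intro hu
      have : f u ∈ B.image f := he ▸ Finset.mem_image_of_mem f hu
      obtain ⟨u', hu', he'⟩ := Finset.mem_image.1 this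
      rwa [hinj (hB hu') (hB' hu) he'] at hu'
  -- labels of collections 1 and 2 lie in {x,y,z,w}
  have hQmem : ∀ u : ℕ, u ∈ Fnd T → u ≠ a → u ≠ b → u ≠ c →
      u = x ∨ u = y ∨ u = z ∨ u = w := by
    intro u hu h1 h2 h3
    rw [hFeq] at hu
    simp only [Finset.mem_insert, Finset.mem_singleton] at hu
    tauto
  have hfQ : ∀ u : ℕ, (u = x ∨ u = y ∨ u = z ∨ u = w) → f u ∈ ({3,4,5,6} : Finset ℕ) := by
    intro u hu
    rcases hu with rfl | rfl | rfl | rfl <;> simp [hfx, hfy, hfz, hfw]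
  have hmemB : ∀ (s : Finset ℕ), s ∈ T 1 ∨ s ∈ T 2 → ∀ u ∈ s, u ∈ Fnd T := by
    rintro s (hs | hs) u hu
    · exact block_sub_Fnd H hs hu
    · exact block_sub_Fnd H hs hu
  -- collection 1 labels
  obtain ⟨h1xa, h1xb, h1xc, h1ya, h1yb, h1yc, h1za, h1zb, h1zc, h1wa, h1wb, h1wc,
    h1xy, h1xz, h1xw, h1yz, h1yw, h1zw⟩ := hd1
  have hx₁Q : x₁ = x ∨ x₁ = y ∨ x₁ = z ∨ x₁ = w :=
    hQmem x₁ (hmemB _ (Or.inl hm11) x₁ (by simp)) h1xa h1xb h1xc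
  have hy₁Q : y₁ = x ∨ y₁ = y ∨ y₁ = z ∨ y₁ = w :=
    hQmem y₁ (hmemB _ (Or.inl hm12) y₁ (by simp)) h1ya h1yb h1yc
  have hz₁Q : z₁ = x ∨ z₁ = y ∨ z₁ = z ∨ z₁ = w :=
    hQmem z₁ (hmemB _ (Or.inl hm13) z₁ (by simp)) h1za h1zb h1zc
  have hw₁Q : w₁ = x ∨ w₁ = y ∨ w₁ = z ∨ w₁ = w :=
    hQmem w₁ (hmemB _ (Or.inl hm14) w₁ (by simp)) h1wa h1wb h1wc
  obtain ⟨h2xa, h2xb, h2xc, h2ya, h2yb, h2yc, h2za, h2zb, h2zc, h2wa, h2wb, h2wc,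
    h2xy, h2xz, h2xw, h2yz, h2yw, h2zw⟩ := hd2
  have hx₂Q : x₂ = x ∨ x₂ = y ∨ x₂ = z ∨ x₂ = w :=
    hQmem x₂ (hmemB _ (Or.inr hm21) x₂ (by simp)) h2xa h2xb h2xc
  have hy₂Q : y₂ = x ∨ y₂ = y ∨ y₂ = z ∨ y₂ = w :=
    hQmem y₂ (hmemB _ (Or.inr hm22) y₂ (by simp)) h2ya h2yb h2yc
  have hz₂Q : z₂ = x ∨ z₂ = y ∨ z₂ = z ∨ z₂ = w :=
    hQmem z₂ (hmemB _ (Or.inr hm23) z₂ (by simp)) h2za h2zb h2zc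
  have hw₂Q : w₂ = x ∨ w₂ = y ∨ w₂ = z ∨ w₂ = w :=
    hQmem w₂ (hmemB _ (Or.inr hm24) w₂ (by simp)) h2wa h2wb h2wc
  -- set equality of label quadruples
  have hQcard : ({x, y, z, w} : Finset ℕ).card = 4 := by
    rw [Finset.card_insert_of_notMem (by simp [hxy, hxz, hxw]),
      Finset.card_insert_of_notMem (by simp [hyz, hyw]),
      Finset.card_insert_of_notMem (by simp [hzw]), Finset.card_singleton]
  have hQeq1 : ({x₁, y₁, z₁, w₁} : Finset ℕ) = {x, y, z, w} := by
    apply Finset.eq_of_subset_of_card_le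
    · intro u hu
      simp only [Finset.mem_insert, Finset.mem_singleton] at hu ⊢
      rcases hu with rfl | rfl | rfl | rfl
      exacts [hx₁Q, hy₁Q, hz₁Q, hw₁Q]
    · rw [hQcard, Finset.card_insert_of_notMem (by simp [h1xy, h1xz, h1xw]),
        Finset.card_insert_of_notMem (by simp [h1yz, h1yw]),
        Finset.card_insert_of_notMem (by simp [h1zw]), Finset.card_singleton]
  have hQeq2 : ({x₂, y₂, z₂, w₂} : Finset ℕ) = {x, y, z, w} := by
    apply Finset.eq_of_subset_of_card_le
    · intro u hu
      simp only [Finset.mem_insert, Finset.mem_singleton] at hu ⊢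
      rcases hu with rfl | rfl | rfl | rfl
      exacts [hx₂Q, hy₂Q, hz₂Q, hw₂Q]
    · rw [hQcard, Finset.card_insert_of_notMem (by simp [h2xy, h2xz, h2xw]),
        Finset.card_insert_of_notMem (by simp [h2yz, h2yw]),
        Finset.card_insert_of_notMem (by simp [h2zw]), Finset.card_singleton]
  have hfset1 : ({f x₁, f y₁, f z₁, f w₁} : Finset ℕ) = {3,4,5,6} := by
    have h1 : ({x₁, y₁, z₁, w₁} : Finset ℕ).image f = {f x₁, f y₁, f z₁, f w₁} := by
      simp [Finset.image_insert]
    have h2 : ({x, y, z, w} : Finset ℕ).image f = {3,4,5,6} := by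
      simp [Finset.image_insert, hfx, hfy, hfz, hfw]
    rw [← h1, hQeq1, h2]
  have hfset2 : ({f x₂, f y₂, f z₂, f w₂} : Finset ℕ) = {3,4,5,6} := by
    have h1 : ({x₂, y₂, z₂, w₂} : Finset ℕ).image f = {f x₂, f y₂, f z₂, f w₂} := by
      simp [Finset.image_insert]
    have h2 : ({x, y, z, w} : Finset ℕ).image f = {3,4,5,6} := by
      simp [Finset.image_insert, hfx, hfy, hfz, hfw]
    rw [← h1, hQeq2, h2]
  -- the G sets are images of actual blocks
  have hG0 : ∀ B ∈ Gq 3 4 5 6, ∃ B₀ ∈ T 0, B₀.image f = B := by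
    intro B hB
    simp only [Gq, Finset.mem_insert, Finset.mem_singleton] at hB
    rcases hB with rfl | rfl | rfl | rfl | rfl | rfl | rfl
    · exact ⟨{a, b, x}, hm01, by simp [Finset.image_insert, hfa, hfb, hfx]⟩
    · exact ⟨{a, c, y}, hm02, by simp [Finset.image_insert, hfa, hfc, hfy]⟩
    · exact ⟨{b, c, z}, hm03, by simp [Finset.image_insert, hfb, hfc, hfz]⟩
    · exact ⟨{a, z, w}, hm04, by simp [Finset.image_insert, hfa, hfz, hfw]⟩
    · exact ⟨{b, y, w}, hm05, by simp [Finset.image_insert, hfb, hfy, hfw]⟩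
    · exact ⟨{c, x, w}, hm06, by simp [Finset.image_insert, hfc, hfx, hfw]⟩
    · exact ⟨{x, y, z}, hm07, by simp [Finset.image_insert, hfx, hfy, hfz]⟩
  have hG1 : ∀ B ∈ Gq (f x₁) (f y₁) (f z₁) (f w₁), ∃ B₀ ∈ T 1, B₀.image f = B := by
    intro B hB
    simp only [Gq, Finset.mem_insert, Finset.mem_singleton] at hB
    rcases hB with rfl | rfl | rfl | rfl | rfl | rfl | rfl
    · exact ⟨{a, b, x₁}, hm11, by simp [Finset.image_insert, hfa, hfb]⟩
    · exact ⟨{a, c, y₁}, hm12, by simp [Finset.image_insert, hfa, hfc]⟩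
    · exact ⟨{b, c, z₁}, hm13, by simp [Finset.image_insert, hfb, hfc]⟩
    · exact ⟨{a, z₁, w₁}, hm14, by simp [Finset.image_insert, hfa]⟩
    · exact ⟨{b, y₁, w₁}, hm15, by simp [Finset.image_insert, hfb]⟩
    · exact ⟨{c, x₁, w₁}, hm16, by simp [Finset.image_insert, hfc]⟩
    · exact ⟨{x₁, y₁, z₁}, hm17, by simp [Finset.image_insert]⟩
  have hG2 : ∀ B ∈ Gq (f x₂) (f y₂) (f z₂) (f w₂), ∃ B₀ ∈ T 2, B₀.image f = B := by
    intro B hB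
    simp only [Gq, Finset.mem_insert, Finset.mem_singleton] at hB
    rcases hB with rfl | rfl | rfl | rfl | rfl | rfl | rfl
    · exact ⟨{a, b, x₂}, hm21, by simp [Finset.image_insert, hfa, hfb]⟩
    · exact ⟨{a, c, y₂}, hm22, by simp [Finset.image_insert, hfa, hfc]⟩
    · exact ⟨{b, c, z₂}, hm23, by simp [Finset.image_insert, hfb, hfc]⟩
    · exact ⟨{a, z₂, w₂}, hm24, by simp [Finset.image_insert, hfa]⟩
    · exact ⟨{b, y₂, w₂}, hm25, by simp [Finset.image_insert, hfb]⟩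
    · exact ⟨{c, x₂, w₂}, hm26, by simp [Finset.image_insert, hfc]⟩
    · exact ⟨{x₂, y₂, z₂}, hm27, by simp [Finset.image_insert]⟩
  have hcore := fano_core (f x₁) (hfQ x₁ hx₁Q) (f y₁) (hfQ y₁ hy₁Q) (f z₁) (hfQ z₁ hz₁Q)
    (f w₁) (hfQ w₁ hw₁Q) hfset1 (f x₂) (hfQ x₂ hx₂Q) (f y₂) (hfQ y₂ hy₂Q)
    (f z₂) (hfQ z₂ hz₂Q) (f w₂) (hfQ w₂ hw₂Q) hfset2
  have hfin : ∀ i j : Fin 3, i ≠ j → ∀ B₀ ∈ T i, ∀ B₁ ∈ T j,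
      B₀.image f = B₁.image f → False := by
    intro i j hij B₀ hB₀ B₁ hB₁ he
    have := himageq B₀ B₁ (block_sub_Fnd H hB₀) (block_sub_Fnd H hB₁) he
    subst this
    exact Finset.disjoint_left.1 (H.1.disj i j hij) hB₀ hB₁
  rcases hcore with ⟨B, hB⟩ | ⟨B, hB⟩ | ⟨B, hB⟩ <;> obtain ⟨h1, h2⟩ := Finset.mem_inter.1 hB
  · obtain ⟨B₀, hB₀, he₀⟩ := hG0 B h1
    obtain ⟨B₁, hB₁, he₁⟩ := hG1 B h2
    exact hfin 0 1 (by decide) B₀ hB₀ B₁ hB₁ (he₀.trans he₁.symm)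
  · obtain ⟨B₀, hB₀, he₀⟩ := hG0 B h1
    obtain ⟨B₁, hB₁, he₁⟩ := hG2 B h2
    exact hfin 0 2 (by decide) B₀ hB₀ B₁ hB₁ (he₀.trans he₁.symm)
  · obtain ⟨B₀, hB₀, he₀⟩ := hG1 B h1
    obtain ⟨B₁, hB₁, he₁⟩ := hG2 B h2
    exact hfin 1 2 (by decide) B₀ hB₀ B₁ hB₁ (he₀.trans he₁.symm)

end n7sec
end SpectrumAux

namespace SpectrumAux
section finals
variable {v : ℕ} {V : Finset ℕ} {T : Fin 3 → Finset (Finset ℕ)}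

lemma nonexist7 (H : IsSteinerTrade 3 v 3 2 7 V T) : False := by
  obtain ⟨n, hn⟩ : ∃ n, (Fnd T).card = n := ⟨_, rfl⟩
  have h2n : 2 * n ≤ 3 * 7 := hn ▸ le_sum_two H
  have h5n : 5 ≤ n := hn ▸ fnd_ge_five H (by omega)
  have hck : 6 * 7 ≤ n * (n - 1) := hn ▸ choose_key H
  have h10 : n ≤ 10 := by omega
  have hkey : 2 * n + 4 ≤ 3 * 7 ∨ 3 * n ≤ 3 * 7 := by
    by_cases h : ∃ x ∈ Fnd T, deg (T 0) x = 2
    · obtain ⟨x, _, hx2⟩ := h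
      exact Or.inl (hn ▸ deg2_key H hx2)
    · push_neg at h
      exact Or.inr (hn ▸ all3_key H (fun x hx => h x hx))
  interval_cases n
  · omega
  · omega
  · exact nonexist7_n7 H hn
  · rcases hkey with h | h
    · exact nonexist7_n8 H hn
    · omega
  · rcases hkey with h | h <;> omega
  · rcases hkey with h | h <;> omega

end finals
end SpectrumAux

theorem spectrum_3way_steiner_k3 (m : ℕ) :
    (∃ (v : ℕ) (V : Finset ℕ) (T : Fin 3 → Finset (Finset ℕ)),
      IsSteinerTrade 3 v 3 2 m V T) ↔ m ∉ ({1, 2, 3, 4, 5, 7} : Finset ℕ) := by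
  constructor
  · rintro ⟨v, V, T, H⟩ hm
    simp only [Finset.mem_insert, Finset.mem_singleton] at hm
    rcases hm with rfl | rfl | rfl | rfl | rfl | rfl
    · exact SpectrumAux.nonexist_small H (by omega) (by omega)
    · exact SpectrumAux.nonexist_small H (by omega) (by omega)
    · exact SpectrumAux.nonexist_small H (by omega) (by omega)
    · exact SpectrumAux.nonexist_small H (by omega) (by omega)
    · exact SpectrumAux.nonexist_small H (by omega) (by omega)
    · exact SpectrumAux.nonexist7 H
  · exact SpectrumAux.exists_trade m
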